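/- arXiv:1904.08296 — 5 statements merged into one kernel-verified Lean document; each statement's English description precedes it below -/
import Mathlib

section
/- There exists a constant C > 0 such that for all real Y > 1, the sum ∑_{n > Y} 1/φ(n)², taken over all integers n > Y, satisfies ∑_{n > Y} 1/φ(n)² ≤ C/Y. -/
open Finset
open scoped ENNReal

open Finset

lemma totient_sq_aux : ∀ n : ℕ, (Odd n → n ≤ n.totient ^ 2) ∧ n ≤ 2 * n.totient ^ 2 := by
  intro n
  induction n using Nat.recOnPosPrimePosCoprime with
  | prime_pow p k hp hk =>
    have hp' : p.Prime := hp
    have hφ : (p ^ k).totient = p ^ (k - 1) * (p - 1) := Nat.totient_prime_pow hp' hk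
    rcases eq_or_ne p 2 with rfl | hodd
    · constructor
      · intro h
        exfalso
        have : Even (2 ^ k) := (Nat.even_pow).2 ⟨even_two, hk.ne'⟩
        exact (Nat.not_odd_iff_even.mpr this) h
      · rw [hφ]
        have h2 : (2:ℕ) - 1 = 1 := rfl
        rw [h2, mul_one]
        have h3 : 2 * (2 ^ (k-1)) ^ 2 = 2 ^ (2 * k - 1) := by
          rw [sq, ← pow_add, ← pow_succ']
          congr 1
          omega
        rw [h3]
        exact Nat.pow_le_pow_right (by norm_num) (by omega)
    · have hp3 : 3 ≤ p := by have := hp'.two_le; omega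
      have key : p ^ k ≤ (p ^ (k - 1) * (p - 1)) ^ 2 := by
        rcases eq_or_ne k 1 with rfl | hk2
        · simp only [Nat.sub_self, pow_zero, one_mul, pow_one]
          obtain ⟨q, rfl⟩ : ∃ q, p = q + 3 := ⟨p - 3, by omega⟩
          have h : q + 3 - 1 = q + 2 := by omega
          rw [h]; nlinarith
        · have hk2' : 2 ≤ k := by omega
          calc p ^ k ≤ p ^ (2 * k - 2) := Nat.pow_le_pow_right hp'.pos (by omega)
            _ = (p ^ (k-1)) ^ 2 := by rw [← pow_mul]; congr 1; omega
            _ ≤ (p ^ (k-1) * (p-1)) ^ 2 := Nat.pow_le_pow_left (Nat.le_mul_of_pos_right _ (by omega)) 2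
      rw [hφ]
      exact ⟨fun _ => key, le_trans key (by omega)⟩
  | zero => simp
  | one => simp
  | coprime a b ha hb hab Pa Pb =>
    have hφ : (a * b).totient = a.totient * b.totient := Nat.totient_mul hab
    constructor
    · intro hodd
      rcases Nat.odd_mul.mp hodd with ⟨hoa, hob⟩
      rw [hφ, mul_pow]
      exact Nat.mul_le_mul (Pa.1 hoa) (Pb.1 hob)
    · have : Odd a ∨ Odd b := by
        by_contra hcon
        push_neg at hcon
        rw [Nat.not_odd_iff_even, Nat.not_odd_iff_even] at hcon
        have h2 : 2 ∣ Nat.gcd a b := Nat.dvd_gcd hcon.1.two_dvd hcon.2.two_dvd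
        rw [hab] at h2
        omega
      rw [hφ, mul_pow]
      rcases this with hoa | hob
      · calc a * b ≤ a.totient^2 * (2 * b.totient^2) := Nat.mul_le_mul (Pa.1 hoa) Pb.2
          _ = 2 * (a.totient^2 * b.totient^2) := by ring
      · calc a * b ≤ (2 * a.totient^2) * b.totient^2 := Nat.mul_le_mul Pa.2 (Pb.1 hob)
          _ = 2 * (a.totient^2 * b.totient^2) := by ring

lemma le_two_mul_totient_sq (n : ℕ) : n ≤ 2 * n.totient ^ 2 := (totient_sq_aux n).2


lemma tail_real (N : ℕ) (hN : 1 ≤ N) :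
    ∑' m : ℕ, (if N ≤ m then ((m:ℝ)^2)⁻¹ else 0) ≤ 2 / N := by
  have hmaj : Summable (fun m : ℕ => ((m:ℝ)^2)⁻¹) := by
    simpa only [one_div] using (Real.summable_one_div_nat_pow (p := 2)).mpr one_lt_two
  have hg : Summable (fun m : ℕ => if N ≤ m then ((m:ℝ)^2)⁻¹ else 0) := by
    apply Summable.of_nonneg_of_le _ _ hmaj
    · intro m; positivity
    · intro m; split
      · exact le_rfl
      · positivity
  refine Summable.tsum_le_of_sum_le hg ?_
  intro u
  rw [← Finset.sum_filter]
  have hsub : u.filter (fun m => N ≤ m) ⊆ Ioo (N-1) (u.sup id + 1) := by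
    intro m hm
    rw [Finset.mem_filter] at hm
    rw [Finset.mem_Ioo]
    constructor
    · omega
    · have h2 : m ≤ u.sup id := by simpa using Finset.le_sup (f := id) hm.1
      omega
  calc ∑ m ∈ u.filter (fun m => N ≤ m), ((m:ℝ)^2)⁻¹
      ≤ ∑ m ∈ Ioo (N-1) (u.sup id + 1), ((m:ℝ)^2)⁻¹ := by
        apply Finset.sum_le_sum_of_subset_of_nonneg hsub
        intro m _ _; positivity
    _ ≤ 2 / (((N-1 : ℕ):ℝ) + 1) := by
        simpa using sum_Ioo_inv_sq_le (α := ℝ) (N-1) (u.sup id + 1)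
    _ = 2 / N := by
        congr 1
        have : ((N-1 : ℕ):ℝ) = (N:ℝ) - 1 := by
          push_cast [hN]; ring
        rw [this]; ring

lemma tail_ennreal {X : ℝ} (hX : 0 < X) :
    ∑' m : ℕ, (if X < (m:ℝ) then ((m:ℝ≥0∞)^2)⁻¹ else 0) ≤ 2 * (ENNReal.ofReal X)⁻¹ := by
  set N := Nat.floor X + 1 with hNdef
  have hN1 : 1 ≤ N := Nat.le_add_left 1 _
  have hiff : ∀ m : ℕ, (X < (m:ℝ)) ↔ N ≤ m := by
    intro m
    rw [← Nat.floor_lt hX.le]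
    omega
  have heq : (fun m : ℕ => if X < (m:ℝ) then ((m:ℝ≥0∞)^2)⁻¹ else 0)
      = fun m : ℕ => ENNReal.ofReal (if N ≤ m then ((m:ℝ)^2)⁻¹ else 0) := by
    funext m
    rw [if_congr (hiff m) rfl rfl]
    split
    · rename_i h
      have hm : 0 < (m:ℝ) := by
        have : 1 ≤ m := le_trans hN1 h
        exact_mod_cast this
      rw [ENNReal.ofReal_inv_of_pos (by positivity), ENNReal.ofReal_pow hm.le,
        ENNReal.ofReal_natCast]
    · simp
  rw [heq, ← ENNReal.ofReal_tsum_of_nonneg]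
  · have h1 : ∑' m : ℕ, (if N ≤ m then ((m:ℝ)^2)⁻¹ else 0) ≤ 2 / N := tail_real N hN1
    have h2 : (2:ℝ) / N ≤ 2 / X := by
      apply div_le_div_of_nonneg_left (by norm_num) hX
      have : X < (N:ℝ) := by rw [hNdef]; push_cast; exact Nat.lt_floor_add_one X
      linarith
    calc ENNReal.ofReal (∑' m : ℕ, (if N ≤ m then ((m:ℝ)^2)⁻¹ else 0))
        ≤ ENNReal.ofReal (2 / X) := ENNReal.ofReal_le_ofReal (le_trans h1 h2)
      _ = 2 * (ENNReal.ofReal X)⁻¹ := by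
          rw [ENNReal.ofReal_div_of_pos hX, div_eq_mul_inv]
          norm_num
  · intro m; split
    · positivity
    · exact le_rfl
  · apply Summable.of_nonneg_of_le _ _ (by
      simpa only [one_div] using (Real.summable_one_div_nat_pow (p := 2)).mpr one_lt_two)
    · intro m; split
      · positivity
      · exact le_rfl
    · intro m; split
      · exact le_rfl
      · positivity


lemma tail_dvd {Y : ℝ} (hY : 0 < Y) (L : ℕ) (hL : 0 < L) :
    ∑' n : {n : ℕ // Y < (n:ℝ)}, (if L ∣ (n:ℕ) then (((n:ℕ):ℝ≥0∞)^2)⁻¹ else 0)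
      ≤ 2 * ((L:ℝ≥0∞) * ENNReal.ofReal Y)⁻¹ := by
  set g : ℕ × ℕ → ℝ≥0∞ := fun p =>
    if p.2 = 0 ∧ Y < ((L * p.1 : ℕ):ℝ) then (((L * p.1 : ℕ):ℝ≥0∞)^2)⁻¹ else 0 with hg
  have step1 : ∑' n : {n : ℕ // Y < (n:ℝ)}, (if L ∣ (n:ℕ) then (((n:ℕ):ℝ≥0∞)^2)⁻¹ else 0)
      ≤ ∑' p : ℕ × ℕ, g p := by
    apply Summable.tsum_le_tsum_of_inj (fun n : {n : ℕ // Y < (n:ℝ)} => ((n:ℕ)/L, (n:ℕ)%L))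
    · intro n n' h
      simp only [Prod.mk.injEq] at h
      have h1 := Nat.div_add_mod (n:ℕ) L
      have h2 := Nat.div_add_mod (n':ℕ) L
      have : (n:ℕ) = (n':ℕ) := by rw [← h1, ← h2, h.1, h.2]
      exact Subtype.ext this
    · intro c _; exact zero_le
    · intro n
      by_cases hd : L ∣ (n:ℕ)
      · rw [if_pos hd, hg]
        simp only
        rw [Nat.mod_eq_zero_of_dvd hd]
        rw [Nat.mul_div_cancel' hd]
        rw [if_pos ⟨rfl, n.2⟩]
      · rw [if_neg hd]
        exact zero_le
    · exact ENNReal.summable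
    · exact ENNReal.summable
  have step2 : ∑' p : ℕ × ℕ, g p
      = ∑' m : ℕ, (if Y < ((L * m : ℕ):ℝ) then (((L * m : ℕ):ℝ≥0∞)^2)⁻¹ else 0) := by
    rw [ENNReal.tsum_prod']
    congr 1
    funext m
    rw [tsum_eq_single 0]
    · simp [hg]
    · intro r hr
      rw [hg]
      simp only
      rw [if_neg]
      tauto
  have hLne : (L:ℝ≥0∞) ≠ 0 := by exact_mod_cast hL.ne'
  have hLtop : (L:ℝ≥0∞) ≠ ⊤ := ENNReal.natCast_ne_top L
  have step3 : ∑' m : ℕ, (if Y < ((L * m : ℕ):ℝ) then (((L * m : ℕ):ℝ≥0∞)^2)⁻¹ else 0)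
      = ((L:ℝ≥0∞)^2)⁻¹ * ∑' m : ℕ, (if Y / L < (m:ℝ) then ((m:ℝ≥0∞)^2)⁻¹ else 0) := by
    rw [← ENNReal.tsum_mul_left]
    congr 1
    funext m
    have hLr : (0:ℝ) < L := by exact_mod_cast hL
    have hcond : (Y < ((L * m : ℕ):ℝ)) ↔ (Y / L < (m:ℝ)) := by
      rw [div_lt_iff₀ hLr]
      push_cast
      rw [mul_comm]
    rw [if_congr hcond rfl rfl]
    split
    · rw [Nat.cast_mul, mul_pow,
        ENNReal.mul_inv (Or.inl (pow_ne_zero 2 hLne)) (Or.inl (ENNReal.pow_ne_top hLtop))]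
    · rw [mul_zero]
  have step4 : ∑' m : ℕ, (if Y / L < (m:ℝ) then ((m:ℝ≥0∞)^2)⁻¹ else 0)
      ≤ 2 * (ENNReal.ofReal (Y / L))⁻¹ := tail_ennreal (by positivity)
  have hYne : ENNReal.ofReal Y ≠ 0 := by
    simp [ENNReal.ofReal_eq_zero]; linarith
  have hYtop : ENNReal.ofReal Y ≠ ⊤ := ENNReal.ofReal_ne_top
  have hdiv : (ENNReal.ofReal (Y / L))⁻¹ = (L:ℝ≥0∞) * (ENNReal.ofReal Y)⁻¹ := by
    have hLr : (0:ℝ) < L := by exact_mod_cast hL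
    rw [ENNReal.ofReal_div_of_pos hLr, ENNReal.ofReal_natCast,
      ENNReal.inv_div (Or.inl hLtop) (Or.inl hLne), div_eq_mul_inv]
  calc ∑' n : {n : ℕ // Y < (n:ℝ)}, (if L ∣ (n:ℕ) then (((n:ℕ):ℝ≥0∞)^2)⁻¹ else 0)
      ≤ ∑' p : ℕ × ℕ, g p := step1
    _ = ∑' m : ℕ, (if Y < ((L * m : ℕ):ℝ) then (((L * m : ℕ):ℝ≥0∞)^2)⁻¹ else 0) := step2
    _ = ((L:ℝ≥0∞)^2)⁻¹ * ∑' m : ℕ, (if Y / L < (m:ℝ) then ((m:ℝ≥0∞)^2)⁻¹ else 0) := step3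
    _ ≤ ((L:ℝ≥0∞)^2)⁻¹ * (2 * (ENNReal.ofReal (Y / L))⁻¹) := mul_le_mul_right step4 _
    _ = 2 * ((L:ℝ≥0∞) * ENNReal.ofReal Y)⁻¹ := by
        rw [hdiv, ENNReal.mul_inv (Or.inl hLne) (Or.inl hLtop)]
        rw [sq, ENNReal.mul_inv (Or.inl hLne) (Or.inl hLtop)]
        calc (L:ℝ≥0∞)⁻¹ * (L:ℝ≥0∞)⁻¹ * (2 * ((L:ℝ≥0∞) * (ENNReal.ofReal Y)⁻¹))
            = 2 * ((L:ℝ≥0∞)⁻¹ * ((L:ℝ≥0∞)⁻¹ * (L:ℝ≥0∞))) * (ENNReal.ofReal Y)⁻¹ := by ring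
          _ = 2 * ((L:ℝ≥0∞)⁻¹ * (ENNReal.ofReal Y)⁻¹) := by
              rw [ENNReal.inv_mul_cancel hLne hLtop, mul_one]; ring

noncomputable def Vt (n : ℕ) (t : ℕ × ℕ × ℕ) : ℝ≥0∞ :=
  if 0 < t.1 * t.2.1 * t.2.2 ∧ t.1 * t.2.1 * t.2.2 ∣ n
  then ((t.1.totient : ℝ≥0∞)^2 * t.2.1.totient * t.2.2.totient)⁻¹ else 0

lemma pointwise (n : ℕ) (hn : 1 ≤ n) :
    ((n.totient:ℝ≥0∞)^2)⁻¹ ≤ ((n:ℝ≥0∞)^2)⁻¹ *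
      ∑ d ∈ n.divisors, ∑ e ∈ n.divisors, ((d.totient:ℝ≥0∞) * (e.totient:ℝ≥0∞))⁻¹ := by
  have hφpos : ∀ m : ℕ, 1 ≤ m → 0 < m.totient := fun m hm => (Nat.totient_pos.mpr hm)
  set T : ℝ≥0∞ := ∑ e ∈ n.divisors, ((e.totient:ℝ≥0∞))⁻¹ with hT
  have hid : ((n:ℝ≥0∞)) = ∑ d ∈ n.divisors, ((d.totient:ℝ≥0∞)) := by
    rw [← Nat.cast_sum]
    exact_mod_cast congrArg (Nat.cast : ℕ → ℝ≥0∞) (Nat.sum_totient n).symm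
  have hterm : ∀ d ∈ n.divisors,
      ((d.totient:ℝ≥0∞)) ≤ (n.totient:ℝ≥0∞) * (((n/d).totient:ℝ≥0∞))⁻¹ := by
    intro d hd
    rw [Nat.mem_divisors] at hd
    have hnd : 1 ≤ n / d := Nat.one_le_div_iff (Nat.pos_of_dvd_of_pos hd.1 hn) |>.mpr
      (Nat.le_of_dvd hn hd.1)
    have hmul : d.totient * (n/d).totient ≤ n.totient := by
      calc d.totient * (n/d).totient ≤ (d * (n/d)).totient := Nat.totient_super_multiplicative _ _
        _ = n.totient := by rw [Nat.mul_div_cancel' hd.1]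
    rw [← div_eq_mul_inv, ENNReal.le_div_iff_mul_le (Or.inl (by exact_mod_cast (hφpos _ hnd).ne'))
      (Or.inl (ENNReal.natCast_ne_top _))]
    exact_mod_cast hmul
  have hsum : (n:ℝ≥0∞) ≤ (n.totient:ℝ≥0∞) * T := by
    rw [hid]
    calc ∑ d ∈ n.divisors, ((d.totient:ℝ≥0∞))
        ≤ ∑ d ∈ n.divisors, (n.totient:ℝ≥0∞) * (((n/d).totient:ℝ≥0∞))⁻¹ :=
          Finset.sum_le_sum hterm
      _ = (n.totient:ℝ≥0∞) * ∑ d ∈ n.divisors, (((n/d).totient:ℝ≥0∞))⁻¹ := by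
          rw [Finset.mul_sum]
      _ = (n.totient:ℝ≥0∞) * T := by
          rw [hT, Nat.sum_div_divisors n (fun e => ((e.totient:ℝ≥0∞))⁻¹)]
  have hφn : (n.totient:ℝ≥0∞) ≠ 0 := by exact_mod_cast (hφpos n hn).ne'
  have hφnt : (n.totient:ℝ≥0∞) ≠ ⊤ := ENNReal.natCast_ne_top _
  have hn0 : (n:ℝ≥0∞) ≠ 0 := by exact_mod_cast Nat.one_le_iff_ne_zero.mp hn
  have hnt : (n:ℝ≥0∞) ≠ ⊤ := ENNReal.natCast_ne_top _
  have hinv : ((n.totient:ℝ≥0∞))⁻¹ ≤ T * ((n:ℝ≥0∞))⁻¹ := by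
    calc ((n.totient:ℝ≥0∞))⁻¹ = ((n:ℝ≥0∞) * ((n:ℝ≥0∞))⁻¹) * ((n.totient:ℝ≥0∞))⁻¹ := by
          rw [ENNReal.mul_inv_cancel hn0 hnt, one_mul]
      _ ≤ (((n.totient:ℝ≥0∞) * T) * ((n:ℝ≥0∞))⁻¹) * ((n.totient:ℝ≥0∞))⁻¹ := by
          gcongr
      _ = (T * ((n:ℝ≥0∞))⁻¹) * ((n.totient:ℝ≥0∞) * ((n.totient:ℝ≥0∞))⁻¹) := by ring
      _ = T * ((n:ℝ≥0∞))⁻¹ := by rw [ENNReal.mul_inv_cancel hφn hφnt, mul_one]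
  calc ((n.totient:ℝ≥0∞)^2)⁻¹ = (((n.totient:ℝ≥0∞))⁻¹)^2 := by rw [ENNReal.inv_pow]
    _ ≤ (T * ((n:ℝ≥0∞))⁻¹)^2 := by gcongr
    _ = ((n:ℝ≥0∞)^2)⁻¹ * (T * T) := by rw [mul_pow, ENNReal.inv_pow, sq T]; ring
    _ = ((n:ℝ≥0∞)^2)⁻¹ *
        ∑ d ∈ n.divisors, ∑ e ∈ n.divisors, ((d.totient:ℝ≥0∞) * (e.totient:ℝ≥0∞))⁻¹ := by
        congr 1
        rw [hT, Finset.sum_mul_sum]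
        refine Finset.sum_congr rfl fun d hd => Finset.sum_congr rfl fun e he => ?_
        rw [Nat.mem_divisors] at hd he
        rw [ENNReal.mul_inv (Or.inl ?_) (Or.inl (ENNReal.natCast_ne_top _))]
        exact_mod_cast (hφpos d (Nat.pos_of_dvd_of_pos hd.1 hn)).ne'

lemma pair_to_triple (n : ℕ) (hn : 1 ≤ n) :
    (∑ d ∈ n.divisors, ∑ e ∈ n.divisors, ((d.totient:ℝ≥0∞) * (e.totient:ℝ≥0∞))⁻¹)
      ≤ ∑' t : ℕ × ℕ × ℕ, Vt n t := by
  set W : ℕ × ℕ → ℝ≥0∞ := fun q =>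
    if q.1 ∈ n.divisors ∧ q.2 ∈ n.divisors
    then ((q.1.totient:ℝ≥0∞) * (q.2.totient:ℝ≥0∞))⁻¹ else 0 with hW
  have hWsum : (∑ d ∈ n.divisors, ∑ e ∈ n.divisors, ((d.totient:ℝ≥0∞) * (e.totient:ℝ≥0∞))⁻¹)
      = ∑' q : ℕ × ℕ, W q := by
    rw [tsum_eq_sum (s := n.divisors ×ˢ n.divisors)
      (fun q hq => if_neg (by simpa [Finset.mem_product] using hq))]
    rw [Finset.sum_product]
    refine Finset.sum_congr rfl fun d hd => Finset.sum_congr rfl fun e he => ?_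
    exact (if_pos ⟨hd, he⟩).symm
  rw [hWsum]
  apply Summable.tsum_le_tsum_of_inj
    (fun q : ℕ × ℕ => (q.1.gcd q.2, q.1 / q.1.gcd q.2, q.2 / q.1.gcd q.2))
  · intro q q' h
    simp only [Prod.mk.injEq] at h
    obtain ⟨h1, h2, h3⟩ := h
    rcases Nat.eq_zero_or_pos (q.1.gcd q.2) with hg | hg
    · have hq : q.1 = 0 ∧ q.2 = 0 := Nat.gcd_eq_zero_iff.mp hg
      have hg' : q'.1.gcd q'.2 = 0 := by rw [← h1, hg]
      have hq' : q'.1 = 0 ∧ q'.2 = 0 := Nat.gcd_eq_zero_iff.mp hg'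
      exact Prod.ext (by rw [hq.1, hq'.1]) (by rw [hq.2, hq'.2])
    · have hg' : 0 < q'.1.gcd q'.2 := h1 ▸ hg
      have e1 : q.1 = q.1.gcd q.2 * (q.1 / q.1.gcd q.2) := (Nat.mul_div_cancel' (Nat.gcd_dvd_left _ _)).symm
      have e2 : q.2 = q.1.gcd q.2 * (q.2 / q.1.gcd q.2) := (Nat.mul_div_cancel' (Nat.gcd_dvd_right _ _)).symm
      have e1' : q'.1 = q'.1.gcd q'.2 * (q'.1 / q'.1.gcd q'.2) := (Nat.mul_div_cancel' (Nat.gcd_dvd_left _ _)).symm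
      have e2' : q'.2 = q'.1.gcd q'.2 * (q'.2 / q'.1.gcd q'.2) := (Nat.mul_div_cancel' (Nat.gcd_dvd_right _ _)).symm
      refine Prod.ext ?_ ?_
      · rw [e1, h2, h1, ← e1']
      · rw [e2, h3, h1, ← e2']
  · intro c _; exact zero_le
  · intro q
    simp only [hW]
    by_cases hq : q.1 ∈ n.divisors ∧ q.2 ∈ n.divisors
    · obtain ⟨hd, he⟩ := hq
      rw [Nat.mem_divisors] at hd he
      have hdpos : 0 < q.1 := Nat.pos_of_dvd_of_pos hd.1 hn
      have hepos : 0 < q.2 := Nat.pos_of_dvd_of_pos he.1 hn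
      set g := q.1.gcd q.2 with hgdef
      set a := q.1 / g with hadef
      set b := q.2 / g with hbdef
      have hgpos : 0 < g := Nat.gcd_pos_of_pos_left _ hdpos
      have ea : q.1 = g * a := (Nat.mul_div_cancel' (Nat.gcd_dvd_left _ _)).symm
      have eb : q.2 = g * b := (Nat.mul_div_cancel' (Nat.gcd_dvd_right _ _)).symm
      have hapos : 0 < a := by
        rcases Nat.eq_zero_or_pos a with h | h
        · rw [h, mul_zero] at ea; omega
        · exact h
      have hbpos : 0 < b := by
        rcases Nat.eq_zero_or_pos b with h | h
        · rw [h, mul_zero] at eb; omega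
        · exact h
      have hlcm : g * a * b = Nat.lcm q.1 q.2 := by
        rw [Nat.lcm, ← hgdef, ea, eb, Nat.mul_mul_mul_comm, mul_assoc g g (a*b),
          Nat.mul_div_cancel_left _ hgpos, ← mul_assoc]
      have hdvd : g * a * b ∣ n := hlcm ▸ Nat.lcm_dvd hd.1 he.1
      rw [if_pos ⟨Nat.mem_divisors.mpr hd, Nat.mem_divisors.mpr he⟩]
      · show _ ≤ Vt n (g, a, b)
        simp only [Vt]
        rw [if_pos ⟨by exact Nat.mul_pos (Nat.mul_pos hgpos hapos) hbpos, hdvd⟩]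
        apply ENNReal.inv_le_inv.mpr
        have h1 : g.totient * a.totient ≤ q.1.totient := by
          rw [ea]; exact Nat.totient_super_multiplicative _ _
        have h2 : g.totient * b.totient ≤ q.2.totient := by
          rw [eb]; exact Nat.totient_super_multiplicative _ _
        calc (g.totient:ℝ≥0∞)^2 * a.totient * b.totient
            = ((g.totient:ℝ≥0∞) * a.totient) * ((g.totient:ℝ≥0∞) * b.totient) := by ring
          _ ≤ (q.1.totient:ℝ≥0∞) * (q.2.totient:ℝ≥0∞) := by
              apply mul_le_mul' <;> exact_mod_cast ‹_›
    · rw [if_neg hq]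
      exact zero_le
  · exact ENNReal.summable
  · exact ENNReal.summable

noncomputable def Ka : ℝ≥0∞ := ∑' a : ℕ, (if 0 < a then ((a:ℝ≥0∞) * a.totient)⁻¹ else 0)
noncomputable def Kg : ℝ≥0∞ := ∑' g : ℕ, (if 0 < g then ((g:ℝ≥0∞) * (g.totient:ℝ≥0∞)^2)⁻¹ else 0)


lemma Ka_ne_top : Ka ≠ ⊤ := by
  have hsum : Summable (fun a : ℕ => 2 / (a:ℝ) ^ ((3:ℝ)/2)) := by
    have := Real.summable_one_div_nat_rpow (p := (3:ℝ)/2) |>.mpr (by norm_num)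
    simpa [div_eq_mul_inv] using this.mul_left 2
  have hterm : ∀ a : ℕ, (if 0 < a then ((a:ℝ≥0∞) * a.totient)⁻¹ else 0)
      ≤ ENNReal.ofReal (2 / (a:ℝ) ^ ((3:ℝ)/2)) := by
    intro a
    split
    · rename_i ha
      have hφ : 0 < a.totient := Nat.totient_pos.mpr ha
      set A := (a:ℝ) with hA
      set P := ((a.totient:ℕ):ℝ) with hP
      have hA1 : 1 ≤ A := by rw [hA]; exact_mod_cast ha
      have hP1 : 1 ≤ P := by rw [hP]; exact_mod_cast hφ
      have hkey : A ≤ 2 * P^2 := by rw [hA, hP]; exact_mod_cast le_two_mul_totient_sq a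
      have hA3 : A^(3:ℕ) ≤ (2*(A*P))^2 := by nlinarith
      have h32 : A^((3:ℝ)/2) = Real.sqrt (A^(3:ℕ)) := by
        rw [Real.sqrt_eq_rpow, ← Real.rpow_natCast A 3, ← Real.rpow_mul (by positivity)]
        norm_num
      have hle : A^((3:ℝ)/2) ≤ 2*(A*P) := by
        rw [h32]
        calc Real.sqrt (A^(3:ℕ)) ≤ Real.sqrt ((2*(A*P))^2) := Real.sqrt_le_sqrt hA3
          _ = 2*(A*P) := Real.sqrt_sq (by positivity)
      have hreal : (A*P)⁻¹ ≤ 2 / A ^ ((3:ℝ)/2) := by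
        rw [inv_eq_one_div, div_le_div_iff₀ (by positivity) (by positivity)]
        nlinarith
      have heq : ((a:ℝ≥0∞) * a.totient)⁻¹ = ENNReal.ofReal ((A*P)⁻¹) := by
        rw [ENNReal.ofReal_inv_of_pos (by positivity), ENNReal.ofReal_mul (by positivity),
          hA, hP, ENNReal.ofReal_natCast, ENNReal.ofReal_natCast]
      rw [heq]
      exact ENNReal.ofReal_le_ofReal hreal
    · exact zero_le
  have : Ka ≤ ENNReal.ofReal (∑' a : ℕ, 2 / (a:ℝ) ^ ((3:ℝ)/2)) := by
    rw [ENNReal.ofReal_tsum_of_nonneg (fun a => by positivity) hsum]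
    exact ENNReal.tsum_le_tsum hterm
  exact ne_top_of_le_ne_top ENNReal.ofReal_ne_top this

lemma Kg_ne_top : Kg ≠ ⊤ := by
  have hsum : Summable (fun g : ℕ => 2 / (g:ℝ) ^ (2:ℕ)) := by
    have := Real.summable_one_div_nat_pow (p := 2) |>.mpr (by norm_num)
    simpa [div_eq_mul_inv] using this.mul_left 2
  have hterm : ∀ g : ℕ, (if 0 < g then ((g:ℝ≥0∞) * (g.totient:ℝ≥0∞)^2)⁻¹ else 0)
      ≤ ENNReal.ofReal (2 / (g:ℝ) ^ (2:ℕ)) := by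
    intro g
    split
    · rename_i hg
      have hφ : 0 < g.totient := Nat.totient_pos.mpr hg
      set G := (g:ℝ) with hG
      set P := ((g.totient:ℕ):ℝ) with hP
      have hG1 : 1 ≤ G := by rw [hG]; exact_mod_cast hg
      have hP1 : 1 ≤ P := by rw [hP]; exact_mod_cast hφ
      have hkey : G ≤ 2 * P^2 := by rw [hG, hP]; exact_mod_cast le_two_mul_totient_sq g
      have hreal : (G*P^2)⁻¹ ≤ 2 / G ^ (2:ℕ) := by
        rw [inv_eq_one_div, div_le_div_iff₀ (by positivity) (by positivity)]
        nlinarith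
      have heq : ((g:ℝ≥0∞) * (g.totient:ℝ≥0∞)^2)⁻¹ = ENNReal.ofReal ((G*P^2)⁻¹) := by
        rw [ENNReal.ofReal_inv_of_pos (by positivity), ENNReal.ofReal_mul (by positivity),
          ENNReal.ofReal_pow (by positivity), hG, hP, ENNReal.ofReal_natCast,
          ENNReal.ofReal_natCast]
      rw [heq]
      exact ENNReal.ofReal_le_ofReal hreal
    · exact zero_le
  have : Kg ≤ ENNReal.ofReal (∑' g : ℕ, 2 / (g:ℝ) ^ (2:ℕ)) := by
    rw [ENNReal.ofReal_tsum_of_nonneg (fun g => by positivity) hsum]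
    exact ENNReal.tsum_le_tsum hterm
  exact ne_top_of_le_ne_top ENNReal.ofReal_ne_top this
lemma mul_inv_nf {x : ℝ≥0∞} (hx0 : x ≠ 0) (hxt : x ≠ ⊤) (y : ℝ≥0∞) :
    (x*y)⁻¹ = x⁻¹ * y⁻¹ := ENNReal.mul_inv (Or.inl hx0) (Or.inl hxt)

/-- There is `C > 0` with `∑_{n > Y} 1/φ(n)² ≤ C/Y` for all `Y > 1`. -/
theorem statement9 :
    ∃ C : ℝ, 0 < C ∧ ∀ Y : ℝ, 1 < Y →
      ∑' n : {n : ℕ // Y < (n : ℝ)}, (1 : ℝ) / (((n : ℕ).totient : ℝ)) ^ 2 ≤ C / Y := by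
  refine ⟨(2 * Kg * (Ka * Ka)).toReal + 1, by
    have := ENNReal.toReal_nonneg (a := 2 * Kg * (Ka * Ka)); linarith, ?_⟩
  intro Y hY
  have hY0 : 0 < Y := by linarith
  have hn1 : ∀ n : {n : ℕ // Y < (n:ℝ)}, 1 ≤ (n:ℕ) := by
    intro n
    have h : (0:ℝ) < ((n:ℕ):ℝ) := lt_trans hY0 n.2
    exact_mod_cast h
  have hφ1 : ∀ n : {n : ℕ // Y < (n:ℝ)}, 0 < (n:ℕ).totient :=
    fun n => Nat.totient_pos.mpr (hn1 n)
  set E : ℝ≥0∞ :=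
    ∑' n : {n : ℕ // Y < (n:ℝ)}, ENNReal.ofReal ((1:ℝ) / (((n:ℕ).totient : ℝ)) ^ 2) with hE
  set w1 : ℕ → ℝ≥0∞ := fun g => if 0 < g then ((g:ℝ≥0∞) * (g.totient:ℝ≥0∞)^2)⁻¹ else 0 with hw1
  set w2 : ℕ → ℝ≥0∞ := fun a => if 0 < a then ((a:ℝ≥0∞) * (a.totient:ℝ≥0∞))⁻¹ else 0 with hw2
  have hKg : Kg = ∑' g : ℕ, w1 g := rfl
  have hKa : Ka = ∑' a : ℕ, w2 a := rfl
  have hofReal : ∀ n : {n : ℕ // Y < (n:ℝ)},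
      ENNReal.ofReal ((1:ℝ) / (((n:ℕ).totient : ℝ)) ^ 2) = (((n:ℕ).totient:ℝ≥0∞)^2)⁻¹ := by
    intro n
    have h := hφ1 n
    rw [one_div, ENNReal.ofReal_inv_of_pos (by positivity), ENNReal.ofReal_pow (by positivity),
      ENNReal.ofReal_natCast]
  have hYne : ENNReal.ofReal Y ≠ 0 := by
    simp only [ne_eq, ENNReal.ofReal_eq_zero, not_le]; linarith
  have main : E ≤ 2 * (ENNReal.ofReal Y)⁻¹ * (Kg * (Ka * Ka)) := by
    calc E = ∑' n : {n : ℕ // Y < (n:ℝ)}, (((n:ℕ).totient:ℝ≥0∞)^2)⁻¹ := tsum_congr hofReal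
      _ ≤ ∑' n : {n : ℕ // Y < (n:ℝ)}, ∑' t : ℕ×ℕ×ℕ, (((n:ℕ):ℝ≥0∞)^2)⁻¹ * Vt (n:ℕ) t := by
          apply ENNReal.tsum_le_tsum
          intro n
          rw [ENNReal.tsum_mul_left]
          exact le_trans (pointwise _ (hn1 n)) (mul_le_mul_right (pair_to_triple _ (hn1 n)) _)
      _ = ∑' t : ℕ×ℕ×ℕ, ∑' n : {n : ℕ // Y < (n:ℝ)}, (((n:ℕ):ℝ≥0∞)^2)⁻¹ * Vt (n:ℕ) t :=
          ENNReal.tsum_comm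
      _ ≤ ∑' t : ℕ×ℕ×ℕ, (2 * (ENNReal.ofReal Y)⁻¹) * (w1 t.1 * (w2 t.2.1 * w2 t.2.2)) := by
          apply ENNReal.tsum_le_tsum
          rintro ⟨g, a, b⟩
          by_cases hL : 0 < g * a * b
          · have hg : 0 < g := Nat.pos_of_ne_zero (by rintro rfl; simp at hL)
            have ha : 0 < a := Nat.pos_of_ne_zero (by rintro rfl; simp at hL)
            have hb : 0 < b := Nat.pos_of_ne_zero (by rintro rfl; simp at hL)
            have hφg := Nat.totient_pos.mpr hg
            have hφa := Nat.totient_pos.mpr ha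
            have hφb := Nat.totient_pos.mpr hb
            have cg0 : (g:ℝ≥0∞) ≠ 0 := Nat.cast_ne_zero.mpr hg.ne'
            have ca0 : (a:ℝ≥0∞) ≠ 0 := Nat.cast_ne_zero.mpr ha.ne'
            have cb0 : (b:ℝ≥0∞) ≠ 0 := Nat.cast_ne_zero.mpr hb.ne'
            have cφg0 : ((g.totient:ℝ≥0∞))^2 ≠ 0 := pow_ne_zero _ (Nat.cast_ne_zero.mpr hφg.ne')
            have cφa0 : ((a.totient:ℝ≥0∞)) ≠ 0 := Nat.cast_ne_zero.mpr hφa.ne'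
            have cφb0 : ((b.totient:ℝ≥0∞)) ≠ 0 := Nat.cast_ne_zero.mpr hφb.ne'
            have tg : (g:ℝ≥0∞) ≠ ⊤ := ENNReal.natCast_ne_top _
            have ta : (a:ℝ≥0∞) ≠ ⊤ := ENNReal.natCast_ne_top _
            have tb : (b:ℝ≥0∞) ≠ ⊤ := ENNReal.natCast_ne_top _
            have tφg : ((g.totient:ℝ≥0∞))^2 ≠ ⊤ := ENNReal.pow_ne_top (ENNReal.natCast_ne_top _)
            have tφa : ((a.totient:ℝ≥0∞)) ≠ ⊤ := ENNReal.natCast_ne_top _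
            have tφb : ((b.totient:ℝ≥0∞)) ≠ ⊤ := ENNReal.natCast_ne_top _
            have hterm : ∀ n : {n : ℕ // Y < (n:ℝ)},
                (((n:ℕ):ℝ≥0∞)^2)⁻¹ * Vt (n:ℕ) (g,a,b)
                = ((g.totient:ℝ≥0∞)^2 * a.totient * b.totient)⁻¹ *
                  (if g*a*b ∣ (n:ℕ) then (((n:ℕ):ℝ≥0∞)^2)⁻¹ else 0) := by
              intro n
              simp only [Vt]
              by_cases hd : g*a*b ∣ (n:ℕ)
              · rw [if_pos ⟨hL, hd⟩, if_pos hd, mul_comm]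
              · rw [if_neg (by tauto), if_neg hd, mul_zero, mul_zero]
            rw [tsum_congr hterm, ENNReal.tsum_mul_left]
            calc ((g.totient:ℝ≥0∞)^2 * a.totient * b.totient)⁻¹ *
                  ∑' n : {n : ℕ // Y < (n:ℝ)}, (if g*a*b ∣ (n:ℕ) then (((n:ℕ):ℝ≥0∞)^2)⁻¹ else 0)
                ≤ ((g.totient:ℝ≥0∞)^2 * a.totient * b.totient)⁻¹ *
                  (2 * (((g*a*b : ℕ):ℝ≥0∞) * ENNReal.ofReal Y)⁻¹) :=
                  mul_le_mul_right (tail_dvd hY0 _ hL) _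
              _ = (2 * (ENNReal.ofReal Y)⁻¹) * (w1 g * (w2 a * w2 b)) := by
                  simp only [hw1, hw2]
                  rw [if_pos hg, if_pos ha, if_pos hb]
                  rw [Nat.cast_mul, Nat.cast_mul]
                  rw [mul_inv_nf (mul_ne_zero (mul_ne_zero cg0 ca0) cb0)
                        (ENNReal.mul_ne_top (ENNReal.mul_ne_top tg ta) tb) (ENNReal.ofReal Y),
                      mul_inv_nf (mul_ne_zero cg0 ca0) (ENNReal.mul_ne_top tg ta) (b:ℝ≥0∞),
                      mul_inv_nf cg0 tg (a:ℝ≥0∞),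
                      mul_inv_nf (mul_ne_zero cφg0 cφa0) (ENNReal.mul_ne_top tφg tφa)
                        ((b.totient:ℝ≥0∞)),
                      mul_inv_nf cφg0 tφg ((a.totient:ℝ≥0∞)),
                      mul_inv_nf cg0 tg (((g.totient:ℝ≥0∞))^2),
                      mul_inv_nf ca0 ta ((a.totient:ℝ≥0∞)),
                      mul_inv_nf cb0 tb ((b.totient:ℝ≥0∞))]
                  ring
          · have hzero : ∀ n : {n : ℕ // Y < (n:ℝ)},
                (((n:ℕ):ℝ≥0∞)^2)⁻¹ * Vt (n:ℕ) (g,a,b) = 0 := by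
              intro n
              simp only [Vt]
              rw [if_neg (by tauto), mul_zero]
            rw [tsum_congr hzero]
            simp
      _ = (2 * (ENNReal.ofReal Y)⁻¹) * (Kg * (Ka * Ka)) := by
          rw [ENNReal.tsum_mul_left]
          congr 1
          rw [ENNReal.tsum_prod']
          calc ∑' (g:ℕ), ∑' (z : ℕ×ℕ), w1 g * (w2 z.1 * w2 z.2)
              = ∑' (g:ℕ), w1 g * ∑' (z:ℕ×ℕ), (w2 z.1 * w2 z.2) := by
                refine tsum_congr fun g => ?_
                rw [ENNReal.tsum_mul_left]
            _ = (∑' (g:ℕ), w1 g) * ∑' (z:ℕ×ℕ), (w2 z.1 * w2 z.2) := ENNReal.tsum_mul_right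
            _ = Kg * (Ka * Ka) := by
                rw [← hKg]
                congr 1
                rw [ENNReal.tsum_prod']
                calc ∑' (a:ℕ), ∑' (b:ℕ), w2 a * w2 b
                    = ∑' (a:ℕ), w2 a * ∑' (b:ℕ), w2 b := by
                      refine tsum_congr fun a => ?_
                      rw [ENNReal.tsum_mul_left]
                  _ = (∑' (a:ℕ), w2 a) * ∑' (b:ℕ), w2 b := ENNReal.tsum_mul_right
                  _ = Ka * Ka := by rw [← hKa]
  have hfin : 2 * (ENNReal.ofReal Y)⁻¹ * (Kg * (Ka * Ka)) ≠ ⊤ :=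
    ENNReal.mul_ne_top (ENNReal.mul_ne_top (by norm_num) (ENNReal.inv_ne_top.mpr hYne))
      (ENNReal.mul_ne_top Kg_ne_top (ENNReal.mul_ne_top Ka_ne_top Ka_ne_top))
  have hreal : ∑' n : {n : ℕ // Y < (n:ℝ)}, (1:ℝ)/(((n:ℕ).totient:ℝ))^2 = E.toReal := by
    rw [hE, ENNReal.tsum_toReal_eq (fun _ => ENNReal.ofReal_ne_top)]
    exact tsum_congr fun n => (ENNReal.toReal_ofReal (by positivity)).symm
  rw [hreal]
  refine le_trans (ENNReal.toReal_mono hfin main) ?_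
  have h2 : (2 * (ENNReal.ofReal Y)⁻¹ * (Kg * (Ka * Ka))).toReal
      = (2 * Kg * (Ka * Ka)).toReal / Y := by
    simp only [ENNReal.toReal_mul, ENNReal.toReal_inv, ENNReal.toReal_ofReal hY0.le,
      ENNReal.toReal_ofNat, div_eq_mul_inv]
    ring
  rw [h2]
  gcongr
  linarith
end

section
/- There exist constants c > 1 and c₁ > 0 such that for all real x ≥ 1: ∑_{n ≤ x} n/φ(n) ≤ c·x and ∑_{n ≤ x} n²/φ(n)² ≤ c₁·x, where the sums range over positive integers n ≤ x. -/
open Finset Nat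

lemma odd_le_sq_totient : ∀ m : ℕ, Odd m → m ≤ m.totient ^ 2 := by
  intro m
  induction m using Nat.recOnPosPrimePosCoprime with
  | prime_pow p n hp hn =>
    intro hodd
    have hne : p ≠ 2 := by
      rintro rfl
      exact (Nat.not_even_iff_odd.mpr hodd) ((even_pow.mpr ⟨even_two, hn.ne'⟩))
    have h3 : 3 ≤ p := by have := hp.two_le; omega
    have hple : p ≤ (p - 1) ^ 2 := by
      obtain ⟨q, rfl⟩ : ∃ q, p = q + 3 := ⟨p - 3, by omega⟩
      have : q + 3 - 1 = q + 2 := by omega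
      rw [this]; nlinarith
    calc p ^ n ≤ p ^ (2 * n - 1) := Nat.pow_le_pow_right (by omega) (by omega)
      _ = p ^ (2 * n - 2) * p := by
          rw [← pow_succ]; congr 1; omega
      _ ≤ p ^ (2 * n - 2) * (p - 1) ^ 2 := Nat.mul_le_mul_left _ hple
      _ = (p ^ (n - 1) * (p - 1)) ^ 2 := by
          rw [mul_pow, ← pow_mul]; congr 2; omega
      _ = ((p ^ n).totient) ^ 2 := by rw [Nat.totient_prime_pow hp hn]
  | zero => intro h; simp at h
  | one => intro _; simp
  | coprime a b ha hb hab iha ihb =>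
    intro hodd
    have hoa : Odd a := by
      rcases Nat.even_or_odd a with h | h
      · exact absurd (h.mul_right b) (Nat.not_even_iff_odd.mpr hodd)
      · exact h
    have hob : Odd b := by
      rcases Nat.even_or_odd b with h | h
      · exact absurd (h.mul_left a) (Nat.not_even_iff_odd.mpr hodd)
      · exact h
    calc a * b ≤ a.totient ^ 2 * b.totient ^ 2 :=
          Nat.mul_le_mul (iha hoa) (ihb hob)
      _ = (a.totient * b.totient) ^ 2 := by ring
      _ = ((a*b).totient) ^ 2 := by rw [Nat.totient_mul hab]

lemma le_two_mul_sq_totient (m : ℕ) : m ≤ 2 * m.totient ^ 2 := by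
  rcases Nat.eq_zero_or_pos m with rfl | hm
  · simp
  obtain ⟨k, t, hto, rfl⟩ : ∃ k t, Odd t ∧ m = 2 ^ k * t := by
    refine ⟨m.factorization 2, m / 2 ^ m.factorization 2, ?_, ?_⟩
    · exact Nat.odd_iff.mpr
        (Nat.two_dvd_ne_zero.mp (Nat.not_dvd_ordCompl prime_two hm.ne'))
    · exact (Nat.ordProj_mul_ordCompl_eq_self m 2).symm
  have ht := odd_le_sq_totient t hto
  have hcop : Nat.Coprime (2 ^ k) t :=
    Nat.Coprime.pow_left _ (Nat.coprime_two_left.mpr hto)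
  rw [Nat.totient_mul hcop]
  rcases Nat.eq_zero_or_pos k with rfl | hk
  · simpa using le_trans ht (by omega)
  rw [Nat.totient_prime_pow prime_two hk]
  have h1 : 2 ^ k * t ≤ 2 * ((2 ^ (k-1))^2 * t.totient ^ 2) := by
    calc 2 ^ k * t ≤ 2 ^ k * t.totient ^ 2 := Nat.mul_le_mul_left _ ht
      _ ≤ 2 ^ (2*k-1) * t.totient^2 :=
          Nat.mul_le_mul_right _ (Nat.pow_le_pow_right (by omega) (by omega))
      _ = 2 * ((2 ^ (k-1))^2 * t.totient ^ 2) := by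
          rw [← pow_mul, ← mul_assoc, ← pow_succ']
          congr 2; omega
  calc 2 ^ k * t ≤ 2 * ((2 ^ (k-1))^2 * t.totient ^ 2) := h1
    _ = 2 * (2 ^ (k-1) * (2 - 1) * t.totient) ^ 2 := by norm_num; ring

lemma inv_totient_le (m : ℕ) (hm : 1 ≤ m) :
    ((m.totient : ℝ))⁻¹ ≤ Real.sqrt 2 * (m : ℝ) ^ (-(1/2) : ℝ) := by
  have hφ : 0 < m.totient := Nat.totient_pos.mpr hm
  have hφR : (0:ℝ) < m.totient := by exact_mod_cast hφ
  have hmR : (0:ℝ) < m := by exact_mod_cast hm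
  have h2 : (m:ℝ) ≤ 2 * (m.totient:ℝ)^2 := by exact_mod_cast le_two_mul_sq_totient m
  have h1 : Real.sqrt m ≤ Real.sqrt 2 * m.totient := by
    have := Real.sqrt_le_sqrt h2
    rwa [Real.sqrt_mul (by norm_num), Real.sqrt_sq hφR.le] at this
  have hs : (0:ℝ) < Real.sqrt m := Real.sqrt_pos.mpr hmR
  rw [Real.rpow_neg (Nat.cast_nonneg m), ← Real.sqrt_eq_rpow, ← div_eq_mul_inv,
    le_div_iff₀ hs, inv_mul_eq_div, div_le_iff₀ hφR]
  exact h1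

lemma swap1 (N : ℕ) (f : ℕ → ℝ) :
    ∑ n ∈ Icc 1 N, ∑ d ∈ n.divisors, f d
      = ∑ d ∈ Icc 1 N, (N / d : ℕ) * f d := by
  have hdiv : ∀ n ∈ Icc 1 N, n.divisors = {d ∈ Icc 1 N | d ∣ n} := by
    intro n hn
    rw [mem_Icc] at hn
    ext d
    simp only [Nat.mem_divisors, Finset.mem_filter, mem_Icc]
    constructor
    · rintro ⟨hd, -⟩
      exact ⟨⟨Nat.pos_of_dvd_of_pos hd (by omega), le_trans (Nat.le_of_dvd (by omega) hd) hn.2⟩, hd⟩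
    · rintro ⟨-, hd⟩
      exact ⟨hd, by omega⟩
  calc ∑ n ∈ Icc 1 N, ∑ d ∈ n.divisors, f d
      = ∑ n ∈ Icc 1 N, ∑ d ∈ Icc 1 N, if d ∣ n then f d else 0 := by
        refine Finset.sum_congr rfl fun n hn => ?_
        rw [hdiv n hn, Finset.sum_filter]
    _ = ∑ d ∈ Icc 1 N, ∑ n ∈ Icc 1 N, if d ∣ n then f d else 0 := Finset.sum_comm
    _ = ∑ d ∈ Icc 1 N, (N / d : ℕ) * f d := by
        refine Finset.sum_congr rfl fun d hd => ?_
        rw [← Finset.sum_filter, Finset.sum_const, nsmul_eq_mul]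
        congr 1
        rw [show Icc 1 N = Ioc 0 N from rfl]
        exact_mod_cast congrArg (Nat.cast (R := ℝ)) (Nat.Ioc_filter_dvd_card_eq_div N d)

lemma ratio_le (n : ℕ) (hn : 1 ≤ n) :
    (n : ℝ) / (n.totient : ℝ) ≤ Real.sqrt 2 * ∑ e ∈ n.divisors, (e : ℝ) ^ (-(1/2) : ℝ) := by
  have hφ : 0 < n.totient := Nat.totient_pos.mpr hn
  have hφR : (0:ℝ) < n.totient := by exact_mod_cast hφ
  have hcast : (n : ℝ) = ∑ d ∈ n.divisors, (d.totient : ℝ) := by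
    exact_mod_cast congrArg (Nat.cast (R := ℝ)) (Nat.sum_totient n).symm
  rw [hcast, Finset.sum_div]
  calc ∑ d ∈ n.divisors, (d.totient : ℝ) / (n.totient : ℝ)
      ≤ ∑ d ∈ n.divisors, Real.sqrt 2 * ((n / d : ℕ) : ℝ) ^ (-(1/2) : ℝ) := by
        refine Finset.sum_le_sum fun d hd => ?_
        obtain ⟨hdvd, -⟩ := Nat.mem_divisors.mp hd
        have hnd : 1 ≤ n / d := Nat.one_le_div_iff (Nat.pos_of_dvd_of_pos hdvd hn) |>.mpr
          (Nat.le_of_dvd hn hdvd)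
        have hndφ : (0:ℝ) < ((n / d).totient : ℝ) := by
          exact_mod_cast Nat.totient_pos.mpr hnd
        have hsup : (d.totient : ℝ) * ((n / d).totient : ℝ) ≤ (n.totient : ℝ) := by
          have := Nat.totient_super_multiplicative d (n / d)
          rw [Nat.mul_div_cancel' hdvd] at this
          exact_mod_cast this
        have h1 : (d.totient : ℝ) / (n.totient : ℝ) ≤ (((n / d).totient : ℝ))⁻¹ := by
          rw [div_le_iff₀ hφR, inv_mul_eq_div, le_div_iff₀ hndφ] at *
          linarith [hsup]
        exact h1.trans (inv_totient_le (n / d) hnd)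
    _ = Real.sqrt 2 * ∑ d ∈ n.divisors, ((n / d : ℕ) : ℝ) ^ (-(1/2) : ℝ) := by
        rw [Finset.mul_sum]
    _ = Real.sqrt 2 * ∑ e ∈ n.divisors, (e : ℝ) ^ (-(1/2) : ℝ) := by
        rw [Nat.sum_div_divisors n (fun e => (e : ℝ) ^ (-(1/2) : ℝ))]

lemma swap2 (N : ℕ) (f : ℕ → ℝ) :
    ∑ n ∈ Icc 1 N, (∑ d ∈ n.divisors, f d) ^ 2
      = ∑ d ∈ Icc 1 N, ∑ e ∈ Icc 1 N, ((N / Nat.lcm d e : ℕ) : ℝ) * (f d * f e) := by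
  have hdiv : ∀ n ∈ Icc 1 N, n.divisors = {d ∈ Icc 1 N | d ∣ n} := by
    intro n hn
    rw [mem_Icc] at hn
    ext d
    simp only [Nat.mem_divisors, Finset.mem_filter, mem_Icc]
    constructor
    · rintro ⟨hd, -⟩
      exact ⟨⟨Nat.pos_of_dvd_of_pos hd (by omega), le_trans (Nat.le_of_dvd (by omega) hd) hn.2⟩, hd⟩
    · rintro ⟨-, hd⟩
      exact ⟨hd, by omega⟩
  calc ∑ n ∈ Icc 1 N, (∑ d ∈ n.divisors, f d) ^ 2
      = ∑ n ∈ Icc 1 N, ∑ d ∈ Icc 1 N, ∑ e ∈ Icc 1 N,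
          (if Nat.lcm d e ∣ n then f d * f e else 0) := by
        refine Finset.sum_congr rfl fun n hn => ?_
        rw [hdiv n hn, Finset.sum_filter, sq, Finset.sum_mul_sum]
        refine Finset.sum_congr rfl fun d _ => Finset.sum_congr rfl fun e _ => ?_
        rw [ite_mul, zero_mul, mul_ite, mul_zero]
        by_cases hd : d ∣ n <;> by_cases he : e ∣ n <;>
          simp [hd, he, Nat.lcm_dvd_iff]
    _ = ∑ d ∈ Icc 1 N, ∑ e ∈ Icc 1 N, ∑ n ∈ Icc 1 N,
          (if Nat.lcm d e ∣ n then f d * f e else 0) := by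
        rw [Finset.sum_comm]
        exact Finset.sum_congr rfl fun d _ => Finset.sum_comm
    _ = ∑ d ∈ Icc 1 N, ∑ e ∈ Icc 1 N, ((N / Nat.lcm d e : ℕ) : ℝ) * (f d * f e) := by
        refine Finset.sum_congr rfl fun d _ => Finset.sum_congr rfl fun e _ => ?_
        rw [← Finset.sum_filter, Finset.sum_const, nsmul_eq_mul]
        congr 1
        rw [show Icc 1 N = Ioc 0 N from rfl]
        exact_mod_cast congrArg (Nat.cast (R := ℝ))
          (Nat.Ioc_filter_dvd_card_eq_div N (Nat.lcm d e))

noncomputable def Zc : ℝ := ∑' k : ℕ, (k : ℝ) ^ (-(3/2) : ℝ)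

lemma Zsummable : Summable (fun k : ℕ => (k : ℝ) ^ (-(3/2) : ℝ)) :=
  Real.summable_nat_rpow.mpr (by norm_num)

lemma Zle (s : Finset ℕ) : ∑ k ∈ s, (k : ℝ) ^ (-(3/2) : ℝ) ≤ Zc :=
  Zsummable.sum_le_tsum s (fun k _ => Real.rpow_nonneg (Nat.cast_nonneg k) _)

lemma one_le_Z : 1 ≤ Zc := by
  have := Zsummable.le_tsum 1 (fun j _ => Real.rpow_nonneg (Nat.cast_nonneg j) _)
  simpa [Zc] using this

lemma Abound (N g : ℕ) (hg : 1 ≤ g) :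
    ∑ d ∈ Icc 1 N, (if g ∣ d then (d : ℝ) ^ (-(3/2) : ℝ) else 0)
      ≤ (g : ℝ) ^ (-(3/2) : ℝ) * Zc := by
  rw [← Finset.sum_filter]
  have hgR : (0:ℝ) < g := by exact_mod_cast hg
  have hsub : {d ∈ Icc 1 N | g ∣ d} ⊆ Finset.image (fun k => g * k) (Icc 1 N) := by
    intro d hd
    rw [Finset.mem_filter, mem_Icc] at hd
    obtain ⟨⟨hd1, hdN⟩, hgd⟩ := hd
    refine Finset.mem_image.mpr ⟨d / g, ?_, Nat.mul_div_cancel' hgd⟩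
    rw [mem_Icc]
    constructor
    · exact (Nat.one_le_div_iff (by omega)).mpr (Nat.le_of_dvd (by omega) hgd)
    · exact le_trans (Nat.div_le_self d g) hdN
  calc ∑ d ∈ {d ∈ Icc 1 N | g ∣ d}, (d : ℝ) ^ (-(3/2) : ℝ)
      ≤ ∑ d ∈ Finset.image (fun k => g * k) (Icc 1 N), (d : ℝ) ^ (-(3/2) : ℝ) :=
        Finset.sum_le_sum_of_subset_of_nonneg hsub
          (fun d _ _ => Real.rpow_nonneg (Nat.cast_nonneg d) _)
    _ = ∑ k ∈ Icc 1 N, ((g * k : ℕ) : ℝ) ^ (-(3/2) : ℝ) := by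
        rw [Finset.sum_image]
        intro a _ b _ h
        exact Nat.eq_of_mul_eq_mul_left (by omega) h
    _ = ∑ k ∈ Icc 1 N, (g : ℝ) ^ (-(3/2) : ℝ) * (k : ℝ) ^ (-(3/2) : ℝ) := by
        refine Finset.sum_congr rfl fun k _ => ?_
        push_cast
        rw [Real.mul_rpow (by positivity) (Nat.cast_nonneg k)]
    _ = (g : ℝ) ^ (-(3/2) : ℝ) * ∑ k ∈ Icc 1 N, (k : ℝ) ^ (-(3/2) : ℝ) := by
        rw [Finset.mul_sum]
    _ ≤ (g : ℝ) ^ (-(3/2) : ℝ) * Zc :=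
        mul_le_mul_of_nonneg_left (Zle _) (Real.rpow_nonneg hgR.le _)

lemma rpow_split (d : ℕ) (hd : 1 ≤ d) :
    (d : ℝ)⁻¹ * (d : ℝ) ^ (-(1/2) : ℝ) = (d : ℝ) ^ (-(3/2) : ℝ) := by
  have hdR : (0:ℝ) < d := by exact_mod_cast hd
  rw [← Real.rpow_neg_one (d : ℝ), ← Real.rpow_add hdR]
  norm_num

lemma key2 (N : ℕ) (x : ℝ) (hNx : (N : ℝ) ≤ x) (hx : 0 ≤ x) :
    ∑ d ∈ Icc 1 N, ∑ e ∈ Icc 1 N,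
        ((N / Nat.lcm d e : ℕ) : ℝ) * ((d:ℝ) ^ (-(1/2):ℝ) * (e:ℝ) ^ (-(1/2):ℝ))
      ≤ x * Zc ^ 3 := by
  set p : ℝ := -(3/2)
  -- Step 1: pointwise bound by x * gcd * d^{-3/2} e^{-3/2}
  have step1 : ∀ d ∈ Icc 1 N, ∀ e ∈ Icc 1 N,
      ((N / Nat.lcm d e : ℕ) : ℝ) * ((d:ℝ) ^ (-(1/2):ℝ) * (e:ℝ) ^ (-(1/2):ℝ))
        ≤ x * ((Nat.gcd d e : ℝ) * ((d:ℝ) ^ p * (e:ℝ) ^ p)) := by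
    intro d hd e he
    rw [mem_Icc] at hd he
    have hd1 : 1 ≤ d := hd.1
    have he1 : 1 ≤ e := he.1
    have hdR : (0:ℝ) < d := by exact_mod_cast hd1
    have heR : (0:ℝ) < e := by exact_mod_cast he1
    have hL : 0 < Nat.lcm d e := Nat.pos_of_ne_zero (Nat.lcm_ne_zero (by omega) (by omega))
    have hLR : (0:ℝ) < (Nat.lcm d e : ℝ) := by exact_mod_cast hL
    have hg : 0 < Nat.gcd d e := Nat.gcd_pos_of_pos_left _ hd1
    have hgR : (0:ℝ) < (Nat.gcd d e : ℝ) := by exact_mod_cast hg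
    have h1 : ((N / Nat.lcm d e : ℕ) : ℝ) ≤ x / (Nat.lcm d e : ℝ) :=
      le_trans (Nat.cast_div_le) (by gcongr)
    have hmul : (Nat.gcd d e : ℝ) * (Nat.lcm d e : ℝ) = (d : ℝ) * e := by
      exact_mod_cast congrArg (Nat.cast (R := ℝ)) (Nat.gcd_mul_lcm d e)
    have h2 : x / (Nat.lcm d e : ℝ) = x * (Nat.gcd d e : ℝ) / ((d:ℝ) * e) := by
      rw [← hmul]
      field_simp
    calc ((N / Nat.lcm d e : ℕ) : ℝ) * ((d:ℝ) ^ (-(1/2):ℝ) * (e:ℝ) ^ (-(1/2):ℝ))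
        ≤ (x / (Nat.lcm d e : ℝ)) * ((d:ℝ) ^ (-(1/2):ℝ) * (e:ℝ) ^ (-(1/2):ℝ)) := by
          apply mul_le_mul_of_nonneg_right h1
          positivity
      _ = x * ((Nat.gcd d e : ℝ) *
            (((d:ℝ)⁻¹ * (d:ℝ) ^ (-(1/2):ℝ)) * ((e:ℝ)⁻¹ * (e:ℝ) ^ (-(1/2):ℝ)))) := by
          rw [h2]
          field_simp
      _ = x * ((Nat.gcd d e : ℝ) * ((d:ℝ) ^ p * (e:ℝ) ^ p)) := by
          rw [rpow_split d hd1, rpow_split e he1]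
  -- Step 2: gcd as a sum over common divisors
  have step2 : ∀ d ∈ Icc 1 N, ∀ e ∈ Icc 1 N,
      (Nat.gcd d e : ℝ) = ∑ g ∈ Icc 1 N, (if g ∣ d ∧ g ∣ e then (g.totient : ℝ) else 0) := by
    intro d hd e he
    rw [mem_Icc] at hd he
    have hg : 0 < Nat.gcd d e := Nat.gcd_pos_of_pos_left _ hd.1
    have hdivs : (Nat.gcd d e).divisors = {g ∈ Icc 1 N | g ∣ d ∧ g ∣ e} := by
      ext g
      simp only [Nat.mem_divisors, Finset.mem_filter, mem_Icc]
      constructor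
      · rintro ⟨hgg, -⟩
        have h1 : g ∣ d := hgg.trans (Nat.gcd_dvd_left d e)
        have h2 : g ∣ e := hgg.trans (Nat.gcd_dvd_right d e)
        exact ⟨⟨Nat.pos_of_dvd_of_pos h1 (by omega),
          le_trans (Nat.le_of_dvd (by omega) h1) hd.2⟩, h1, h2⟩
      · rintro ⟨-, h1, h2⟩
        exact ⟨Nat.dvd_gcd h1 h2, by omega⟩
    have := Nat.sum_totient (Nat.gcd d e)
    rw [hdivs] at this
    rw [← Finset.sum_filter]
    exact_mod_cast (congrArg (Nat.cast (R := ℝ)) this).symm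
  -- combine
  calc ∑ d ∈ Icc 1 N, ∑ e ∈ Icc 1 N,
        ((N / Nat.lcm d e : ℕ) : ℝ) * ((d:ℝ) ^ (-(1/2):ℝ) * (e:ℝ) ^ (-(1/2):ℝ))
      ≤ ∑ d ∈ Icc 1 N, ∑ e ∈ Icc 1 N,
          x * ((∑ g ∈ Icc 1 N, (if g ∣ d ∧ g ∣ e then (g.totient : ℝ) else 0))
            * ((d:ℝ) ^ p * (e:ℝ) ^ p)) := by
        refine Finset.sum_le_sum fun d hd => Finset.sum_le_sum fun e he => ?_
        rw [← step2 d hd e he]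
        exact step1 d hd e he
    _ = x * ∑ g ∈ Icc 1 N, (g.totient : ℝ) *
          ((∑ d ∈ Icc 1 N, (if g ∣ d then (d:ℝ) ^ p else 0)) *
           (∑ e ∈ Icc 1 N, (if g ∣ e then (e:ℝ) ^ p else 0))) := by
        have expand : ∀ d e : ℕ,
            x * ((∑ g ∈ Icc 1 N, (if g ∣ d ∧ g ∣ e then (g.totient : ℝ) else 0))
              * ((d:ℝ) ^ p * (e:ℝ) ^ p))
            = ∑ g ∈ Icc 1 N, x * ((g.totient : ℝ) *
                ((if g ∣ d then (d:ℝ) ^ p else 0) * (if g ∣ e then (e:ℝ) ^ p else 0))) := by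
          intro d e
          rw [Finset.sum_mul, Finset.mul_sum]
          refine Finset.sum_congr rfl fun g _ => ?_
          by_cases h1 : g ∣ d <;> by_cases h2 : g ∣ e <;> simp [h1, h2] <;> ring
        calc ∑ d ∈ Icc 1 N, ∑ e ∈ Icc 1 N,
              x * ((∑ g ∈ Icc 1 N, (if g ∣ d ∧ g ∣ e then (g.totient : ℝ) else 0))
                * ((d:ℝ) ^ p * (e:ℝ) ^ p))
            = ∑ d ∈ Icc 1 N, ∑ e ∈ Icc 1 N, ∑ g ∈ Icc 1 N,
                x * ((g.totient : ℝ) *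
                  ((if g ∣ d then (d:ℝ) ^ p else 0) * (if g ∣ e then (e:ℝ) ^ p else 0))) := by
              exact Finset.sum_congr rfl fun d _ => Finset.sum_congr rfl fun e _ => expand d e
          _ = ∑ g ∈ Icc 1 N, ∑ d ∈ Icc 1 N, ∑ e ∈ Icc 1 N,
                x * ((g.totient : ℝ) *
                  ((if g ∣ d then (d:ℝ) ^ p else 0) * (if g ∣ e then (e:ℝ) ^ p else 0))) := by
              rw [show (∑ d ∈ Icc 1 N, ∑ e ∈ Icc 1 N, ∑ g ∈ Icc 1 N,
                x * ((g.totient : ℝ) *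
                  ((if g ∣ d then (d:ℝ) ^ p else 0) * (if g ∣ e then (e:ℝ) ^ p else 0))))
                = ∑ d ∈ Icc 1 N, ∑ g ∈ Icc 1 N, ∑ e ∈ Icc 1 N,
                x * ((g.totient : ℝ) *
                  ((if g ∣ d then (d:ℝ) ^ p else 0) * (if g ∣ e then (e:ℝ) ^ p else 0)))
                from Finset.sum_congr rfl fun d _ => Finset.sum_comm]
              exact Finset.sum_comm
          _ = x * ∑ g ∈ Icc 1 N, (g.totient : ℝ) *
                ((∑ d ∈ Icc 1 N, (if g ∣ d then (d:ℝ) ^ p else 0)) *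
                 (∑ e ∈ Icc 1 N, (if g ∣ e then (e:ℝ) ^ p else 0))) := by
              rw [Finset.mul_sum]
              refine Finset.sum_congr rfl fun g _ => ?_
              rw [Finset.sum_mul_sum]
              simp only [← Finset.mul_sum]
    _ ≤ x * Zc ^ 3 := by
        have hZ0 : (0:ℝ) ≤ Zc := le_trans zero_le_one one_le_Z
        have key : ∑ g ∈ Icc 1 N, (g.totient : ℝ) *
                ((∑ d ∈ Icc 1 N, (if g ∣ d then (d:ℝ) ^ p else 0)) *
                 (∑ e ∈ Icc 1 N, (if g ∣ e then (e:ℝ) ^ p else 0))) ≤ Zc ^ 3 := by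
          calc ∑ g ∈ Icc 1 N, (g.totient : ℝ) *
                ((∑ d ∈ Icc 1 N, (if g ∣ d then (d:ℝ) ^ p else 0)) *
                 (∑ e ∈ Icc 1 N, (if g ∣ e then (e:ℝ) ^ p else 0)))
              ≤ ∑ g ∈ Icc 1 N, (g:ℝ) ^ p * Zc ^ 2 := by
                refine Finset.sum_le_sum fun g hg => ?_
                rw [mem_Icc] at hg
                have hg1 : 1 ≤ g := hg.1
                have hgR : (1:ℝ) ≤ g := by exact_mod_cast hg1
                have hA0 : (0:ℝ) ≤ ∑ d ∈ Icc 1 N, (if g ∣ d then (d:ℝ) ^ p else 0) :=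
                  Finset.sum_nonneg fun d _ => by
                    split <;> [exact Real.rpow_nonneg (Nat.cast_nonneg d) _; rfl]
                have hAB := Abound N g hg1
                have hgp : (0:ℝ) ≤ (g:ℝ) ^ p := Real.rpow_nonneg (by positivity) _
                have hφg : (g.totient : ℝ) ≤ g := by exact_mod_cast Nat.totient_le g
                calc (g.totient : ℝ) *
                      ((∑ d ∈ Icc 1 N, (if g ∣ d then (d:ℝ) ^ p else 0)) *
                       (∑ e ∈ Icc 1 N, (if g ∣ e then (e:ℝ) ^ p else 0)))
                    ≤ (g:ℝ) * (((g:ℝ) ^ p * Zc) * ((g:ℝ) ^ p * Zc)) := by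
                      refine mul_le_mul hφg ?_ (mul_nonneg hA0 hA0) (by positivity)
                      exact mul_le_mul hAB hAB hA0 (by positivity)
                  _ = ((g:ℝ) * ((g:ℝ) ^ p * (g:ℝ) ^ p)) * Zc ^ 2 := by ring
                  _ = (g:ℝ) ^ (-2 : ℝ) * Zc ^ 2 := by
                      have hgpos : (0:ℝ) < g := by linarith
                      rw [← Real.rpow_add hgpos, ← Real.rpow_one_add' (by linarith) (by norm_num)]
                      norm_num
                  _ ≤ (g:ℝ) ^ p * Zc ^ 2 := by
                      have := Real.rpow_le_rpow_of_exponent_le hgR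
                        (show (-2:ℝ) ≤ p by norm_num [p])
                      exact mul_le_mul_of_nonneg_right this (by positivity)
            _ = (∑ g ∈ Icc 1 N, (g:ℝ) ^ p) * Zc ^ 2 := by rw [Finset.sum_mul]
            _ ≤ Zc * Zc ^ 2 := mul_le_mul_of_nonneg_right (Zle _) (by positivity)
            _ = Zc ^ 3 := by ring
        exact mul_le_mul_of_nonneg_left key hx

/-- There are constants `c > 1` and `c₁ > 0` with `∑_{n ≤ x} n/φ(n) ≤ c·x` and
`∑_{n ≤ x} n²/φ(n)² ≤ c₁·x` for all real `x ≥ 1`. -/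
theorem statement10 :
    ∃ c c₁ : ℝ, 1 < c ∧ 0 < c₁ ∧ ∀ x : ℝ, 1 ≤ x →
      (∑ n ∈ Finset.Icc 1 ⌊x⌋₊, ((n : ℝ) / (n.totient : ℝ)) ≤ c * x) ∧
      (∑ n ∈ Finset.Icc 1 ⌊x⌋₊, ((n : ℝ) ^ 2 / ((n.totient : ℝ)) ^ 2) ≤ c₁ * x) := by
  have hs2 : (1:ℝ) < Real.sqrt 2 := by
    have : Real.sqrt 1 < Real.sqrt 2 := Real.sqrt_lt_sqrt (by norm_num) (by norm_num)
    simpa using this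
  have hZ0 : (0:ℝ) < Zc := lt_of_lt_of_le one_pos one_le_Z
  refine ⟨Real.sqrt 2 * Zc, 2 * Zc ^ 3, ?_, by positivity, ?_⟩
  · calc (1:ℝ) < Real.sqrt 2 := hs2
      _ ≤ Real.sqrt 2 * Zc := le_mul_of_one_le_right (by positivity) one_le_Z
  intro x hx
  set N := ⌊x⌋₊ with hN
  have hNx : (N : ℝ) ≤ x := Nat.floor_le (by linarith)
  have hx0 : (0:ℝ) ≤ x := by linarith
  constructor
  · calc ∑ n ∈ Icc 1 N, ((n : ℝ) / (n.totient : ℝ))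
        ≤ ∑ n ∈ Icc 1 N, Real.sqrt 2 * ∑ e ∈ n.divisors, (e : ℝ) ^ (-(1/2) : ℝ) :=
          Finset.sum_le_sum fun n hn => ratio_le n (mem_Icc.mp hn).1
      _ = Real.sqrt 2 * ∑ n ∈ Icc 1 N, ∑ e ∈ n.divisors, (e : ℝ) ^ (-(1/2) : ℝ) :=
          (Finset.mul_sum _ _ _).symm
      _ = Real.sqrt 2 * ∑ d ∈ Icc 1 N, ((N / d : ℕ) : ℝ) * (d : ℝ) ^ (-(1/2) : ℝ) := by
          rw [swap1]
      _ ≤ Real.sqrt 2 * ∑ d ∈ Icc 1 N, x * (d : ℝ) ^ (-(3/2) : ℝ) := by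
          refine mul_le_mul_of_nonneg_left (Finset.sum_le_sum fun d hd => ?_)
            (Real.sqrt_nonneg 2)
          rw [mem_Icc] at hd
          have hd1 : 1 ≤ d := hd.1
          have hdR : (0:ℝ) < d := by exact_mod_cast hd1
          have h1 : ((N / d : ℕ) : ℝ) ≤ x / d := le_trans Nat.cast_div_le (by gcongr)
          calc ((N / d : ℕ) : ℝ) * (d : ℝ) ^ (-(1/2) : ℝ)
              ≤ (x / d) * (d : ℝ) ^ (-(1/2) : ℝ) :=
                mul_le_mul_of_nonneg_right h1 (Real.rpow_nonneg hdR.le _)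
            _ = x * ((d : ℝ)⁻¹ * (d : ℝ) ^ (-(1/2) : ℝ)) := by ring
            _ = x * (d : ℝ) ^ (-(3/2) : ℝ) := by rw [rpow_split d hd1]
      _ = Real.sqrt 2 * (x * ∑ d ∈ Icc 1 N, (d : ℝ) ^ (-(3/2) : ℝ)) := by
          rw [← Finset.mul_sum]
      _ ≤ Real.sqrt 2 * (x * Zc) := by
          refine mul_le_mul_of_nonneg_left (mul_le_mul_of_nonneg_left (Zle _) hx0)
            (Real.sqrt_nonneg 2)
      _ = Real.sqrt 2 * Zc * x := by ring
  · calc ∑ n ∈ Icc 1 N, ((n : ℝ) ^ 2 / ((n.totient : ℝ)) ^ 2)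
        = ∑ n ∈ Icc 1 N, ((n : ℝ) / (n.totient : ℝ)) ^ 2 := by
          refine Finset.sum_congr rfl fun n _ => (div_pow _ _ 2).symm
      _ ≤ ∑ n ∈ Icc 1 N, 2 * (∑ e ∈ n.divisors, (e : ℝ) ^ (-(1/2) : ℝ)) ^ 2 := by
          refine Finset.sum_le_sum fun n hn => ?_
          have hn1 : 1 ≤ n := (mem_Icc.mp hn).1
          have h := ratio_le n hn1
          have hnn : 0 ≤ (n : ℝ) / (n.totient : ℝ) := by positivity
          calc ((n : ℝ) / (n.totient : ℝ)) ^ 2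
              ≤ (Real.sqrt 2 * ∑ e ∈ n.divisors, (e : ℝ) ^ (-(1/2) : ℝ)) ^ 2 := by
                exact pow_le_pow_left₀ hnn h 2
            _ = 2 * (∑ e ∈ n.divisors, (e : ℝ) ^ (-(1/2) : ℝ)) ^ 2 := by
                rw [mul_pow, Real.sq_sqrt (by norm_num : (0:ℝ) ≤ 2)]
      _ = 2 * ∑ n ∈ Icc 1 N, (∑ e ∈ n.divisors, (e : ℝ) ^ (-(1/2) : ℝ)) ^ 2 :=
          (Finset.mul_sum _ _ _).symm
      _ = 2 * ∑ d ∈ Icc 1 N, ∑ e ∈ Icc 1 N,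
            ((N / Nat.lcm d e : ℕ) : ℝ) * ((d:ℝ) ^ (-(1/2):ℝ) * (e:ℝ) ^ (-(1/2):ℝ)) := by
          rw [swap2]
      _ ≤ 2 * (x * Zc ^ 3) :=
          mul_le_mul_of_nonneg_left (key2 N x hNx hx0) (by norm_num)
      _ = 2 * Zc ^ 3 * x := by ring
end

section
/- The arithmetic function H defined by H(n) = ∑_{d ∣ n} #{k : 1 ≤ k ≤ d, d ∣ k²} is multiplicative, and for every prime p and every integer k ≥ 1 one has H(p^{2k}) = 2·σ(p^{k−1}) + p^k and H(p^{2k−1}) = 2·σ(p^{k−1}). -/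
open Finset

/-- The arithmetic function `H(n) = ∑_{d ∣ n} #{k : 1 ≤ k ≤ d, d ∣ k²}`. -/
def Hfun (n : ℕ) : ℕ :=
  ∑ d ∈ n.divisors, ((Finset.Icc 1 d).filter fun k => d ∣ k ^ 2).card

private lemma Hfun_card_Icc_eq_range (d : ℕ) (hd : 0 < d) :
    ((Icc 1 d).filter fun k => d ∣ k ^ 2).card
      = ((range d).filter fun k => d ∣ k ^ 2).card := by
  have h1 : Icc 1 d = insert d (Ico 1 d) := by
    rw [Finset.Ico_insert_right (by omega)]
  have h2 : range d = insert 0 (Ico 1 d) := by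
    rw [range_eq_Ico, ← Finset.insert_Ico_add_one_left_eq_Ico (by omega), zero_add]
  rw [h1, h2, filter_insert, filter_insert,
    if_pos (dvd_pow_self d two_ne_zero), if_pos (by simp),
    card_insert_of_notMem (by simp), card_insert_of_notMem (by simp)]

private lemma Hfun_card_eq_zmod (d : ℕ) [NeZero d] :
    ((Icc 1 d).filter fun k => d ∣ k ^ 2).card
      = Fintype.card {x : ZMod d // x ^ 2 = 0} := by
  rw [Hfun_card_Icc_eq_range d (Nat.pos_of_ne_zero (NeZero.ne d)), Fintype.card_subtype]
  refine Finset.card_nbij' (fun k => (k : ZMod d)) (fun x => x.val) ?_ ?_ ?_ ?_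
  · intro k hk
    simp only [coe_filter, Set.mem_setOf_eq, mem_coe, mem_filter, mem_range] at hk
    simp only [coe_filter, Set.mem_setOf_eq, mem_coe, mem_filter, mem_univ, true_and]
    rw [← Nat.cast_pow, ZMod.natCast_eq_zero_iff]
    exact hk.2
  · intro x hx
    simp only [coe_filter, Set.mem_setOf_eq, mem_coe, mem_filter, mem_univ, true_and] at hx
    simp only [coe_filter, Set.mem_setOf_eq, mem_coe, mem_filter, mem_range]
    refine ⟨ZMod.val_lt x, ?_⟩
    rw [← ZMod.natCast_eq_zero_iff, Nat.cast_pow, ZMod.natCast_val, ZMod.cast_id]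
    exact hx
  · intro k hk
    simp only [coe_filter, Set.mem_setOf_eq, mem_coe, mem_filter, mem_range] at hk
    exact ZMod.val_cast_of_lt hk.1
  · intro x _
    exact ZMod.natCast_rightInverse x

private lemma Hfun_card_sq_mul (m n : ℕ) [NeZero m] [NeZero n] (h : Nat.Coprime m n) :
    Fintype.card {x : ZMod (m * n) // x ^ 2 = 0}
      = Fintype.card {x : ZMod m // x ^ 2 = 0} * Fintype.card {x : ZMod n // x ^ 2 = 0} := by
  haveI : NeZero (m * n) := ⟨Nat.mul_ne_zero (NeZero.ne m) (NeZero.ne n)⟩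
  have e := ZMod.chineseRemainder h
  have e1 : {x : ZMod (m * n) // x ^ 2 = 0} ≃ {y : ZMod m × ZMod n // y ^ 2 = 0} :=
    (e : ZMod (m*n) ≃* _).toEquiv.subtypeEquiv (fun x => by
      constructor
      · intro hx
        have : e (x ^ 2) = 0 := by rw [hx]; exact map_zero e
        rwa [map_pow] at this
      · intro hx
        have : e (x ^ 2) = e 0 := by rw [map_pow, map_zero]; exact hx
        exact e.injective this)
  have e2 : {y : ZMod m × ZMod n // y ^ 2 = 0} ≃
      {a : ZMod m // a ^ 2 = 0} × {b : ZMod n // b ^ 2 = 0} := by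
    refine (Equiv.subtypeEquivRight (fun y => ?_)).trans (Equiv.subtypeProdEquivProd)
    rw [Prod.pow_def]
    exact Prod.mk_eq_zero
  rw [Fintype.card_congr (e1.trans e2), Fintype.card_prod]

/-- the summand as an arithmetic function -/
private def HfunF : ArithmeticFunction ℕ :=
  ⟨fun d => ((Icc 1 d).filter fun k => d ∣ k ^ 2).card, by simp⟩

private lemma HfunF_isMultiplicative : HfunF.IsMultiplicative := by
  constructor
  · decide
  · intro m n h
    rcases Nat.eq_zero_or_pos m with rfl | hm
    · have hn : n = 1 := (Nat.coprime_zero_left n).mp h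
      subst hn; decide
    rcases Nat.eq_zero_or_pos n with rfl | hn
    · have hm : m = 1 := (Nat.coprime_zero_right m).mp h
      subst hm; decide
    haveI : NeZero m := ⟨hm.ne'⟩
    haveI : NeZero n := ⟨hn.ne'⟩
    show ((Icc 1 (m*n)).filter fun k => (m*n) ∣ k ^ 2).card
        = ((Icc 1 m).filter fun k => m ∣ k ^ 2).card
          * ((Icc 1 n).filter fun k => n ∣ k ^ 2).card
    haveI : NeZero (m * n) := ⟨Nat.mul_ne_zero (NeZero.ne m) (NeZero.ne n)⟩
    rw [Hfun_card_eq_zmod, Hfun_card_eq_zmod, Hfun_card_eq_zmod, Hfun_card_sq_mul m n h]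

private lemma Hfun_eq (n : ℕ) : Hfun n = (ArithmeticFunction.zeta * HfunF) n := by
  rw [ArithmeticFunction.zeta_mul_apply]
  rfl

private lemma f_prime_pow {p : ℕ} (pp : p.Prime) (e : ℕ) :
    ((Icc 1 (p ^ e)).filter fun k => p ^ e ∣ k ^ 2).card = p ^ (e / 2) := by
  have h1 : Icc 1 (p ^ e) = Ioc 0 (p ^ e) := rfl
  rw [h1]
  have h2 : ((Ioc 0 (p ^ e)).filter fun k => p ^ e ∣ k ^ 2).card
      = ((Ioc 0 (p ^ e)).filter fun k => p ^ ((e+1)/2) ∣ k).card := by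
    apply congrArg
    apply filter_congr
    intro k hk
    simp only [mem_Ioc] at hk
    have hk0 : k ≠ 0 := by omega
    rw [pp.pow_dvd_iff_le_factorization (pow_ne_zero 2 hk0),
      pp.pow_dvd_iff_le_factorization hk0, Nat.factorization_pow,
      Finsupp.smul_apply, smul_eq_mul]
    omega
  rw [h2, Nat.Ioc_filter_dvd_card_eq_div, Nat.pow_div (by omega) pp.pos]
  congr 1
  omega

private lemma geom_sum_even {p : ℕ} (j : ℕ) :
    ∑ e ∈ range (2 * j + 2), p ^ (e / 2) = 2 * ∑ i ∈ range (j + 1), p ^ i := by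
  induction j with
  | zero => simp [Finset.sum_range_succ]
  | succ j ih =>
    have h1 : 2 * (j + 1) + 2 = (2 * j + 2) + 1 + 1 := by ring
    rw [h1, Finset.sum_range_succ, Finset.sum_range_succ, ih,
      Finset.sum_range_succ (fun i => p ^ i) (j + 1)]
    have h2 : (2 * j + 2) / 2 = j + 1 := by omega
    have h3 : (2 * j + 2 + 1) / 2 = j + 1 := by omega
    rw [h2, h3]
    ring

private lemma Hfun_prime_pow {p : ℕ} (pp : p.Prime) (m : ℕ) :
    Hfun (p ^ m) = ∑ e ∈ range (m + 1), p ^ (e / 2) := by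
  show (∑ d ∈ (p ^ m).divisors, ((Icc 1 d).filter fun k => d ∣ k ^ 2).card) = _
  rw [Nat.sum_divisors_prime_pow pp]
  exact Finset.sum_congr rfl fun e _ => f_prime_pow pp e

/-- `H` is multiplicative, and `H(p^{2k}) = 2σ(p^{k-1}) + p^k`, `H(p^{2k-1}) = 2σ(p^{k-1})`
for every prime `p` and `k ≥ 1`. -/
theorem statement12 :
    (∀ m n : ℕ, Nat.Coprime m n → Hfun (m * n) = Hfun m * Hfun n) ∧
    ∀ p : ℕ, p.Prime → ∀ k : ℕ, 1 ≤ k →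
      Hfun (p ^ (2 * k)) = 2 * (∑ d ∈ (p ^ (k - 1)).divisors, d) + p ^ k ∧
      Hfun (p ^ (2 * k - 1)) = 2 * (∑ d ∈ (p ^ (k - 1)).divisors, d) := by
  constructor
  · intro m n h
    rw [Hfun_eq, Hfun_eq, Hfun_eq]
    exact (ArithmeticFunction.isMultiplicative_zeta.mul HfunF_isMultiplicative).2 h
  · intro p pp k hk
    obtain ⟨j, rfl⟩ : ∃ j, k = j + 1 := ⟨k - 1, by omega⟩
    have hσ : (∑ d ∈ (p ^ (j + 1 - 1)).divisors, d) = ∑ i ∈ range (j + 1), p ^ i := by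
      have : j + 1 - 1 = j := rfl
      rw [this, Nat.sum_divisors_prime_pow pp]
    constructor
    · have h2 : 2 * (j + 1) = 2 * j + 2 := by ring
      rw [h2, Hfun_prime_pow pp, hσ, Finset.sum_range_succ, geom_sum_even]
      congr 2
      omega
    · have h2 : 2 * (j + 1) - 1 = 2 * j + 1 := by omega
      rw [h2, Hfun_prime_pow pp, hσ]
      exact geom_sum_even j
end

section
/- Let n = ∏_{i=1}^r p_i^{α_i} be the prime factorization of an integer n ≥ 2 (distinct primes p_i, exponents α_i ≥ 1). Then 2^r·σ(∏_{i=1}^r p_i^{⌈α_i/2⌉−1}) ≤ H(n) ≤ 2^r·σ(∏_{i=1}^r p_i^{⌊α_i/2⌋}). In particular, H(n) < n² for every integer n ≥ 2. -/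
open Finset ArithmeticFunction in
/-- The inner count equals `∏ p^(⌊v_p(d)/2⌋)`. -/
lemma Hfun_count (d : ℕ) (hd : 0 < d) :
    ((Finset.Icc 1 d).filter fun k => d ∣ k ^ 2).card
      = ∏ p ∈ d.primeFactors, p ^ (d.factorization p / 2) := by
  classical
  set s : ℕ := ∏ p ∈ d.primeFactors, p ^ ((d.factorization p + 1) / 2) with hs
  have hterm : ∀ p ∈ d.primeFactors, p ^ ((d.factorization p + 1) / 2) ≠ 0 :=
    fun p hp => pow_ne_zero _ (Nat.pos_of_mem_primeFactors hp).ne'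
  have hs0 : s ≠ 0 := Finset.prod_ne_zero_iff.mpr hterm
  have hsfac : ∀ q : ℕ, s.factorization q = (d.factorization q + 1) / 2 := by
    intro q
    rw [hs, Nat.factorization_prod hterm, Finset.sum_apply']
    by_cases hq : q ∈ d.primeFactors
    · rw [Finset.sum_eq_single q]
      · rw [(Nat.prime_of_mem_primeFactors hq).factorization_pow, Finsupp.single_eq_same]
      · intro p hp hpq
        rw [(Nat.prime_of_mem_primeFactors hp).factorization_pow,
          Finsupp.single_eq_of_ne hpq.symm]
      · exact fun h => absurd hq h
    · have h0 : d.factorization q = 0 := by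
        rw [← Finsupp.notMem_support_iff, Nat.support_factorization]; exact hq
      rw [h0]
      refine Eq.trans (Finset.sum_eq_zero fun p hp => ?_) (by norm_num)
      rw [(Nat.prime_of_mem_primeFactors hp).factorization_pow,
        Finsupp.single_eq_of_ne (fun h => hq (by rw [h]; exact hp))]
  have key : ∀ k ∈ Finset.Icc 1 d, (d ∣ k ^ 2 ↔ s ∣ k) := by
    intro k hk
    have hk0 : k ≠ 0 := by
      have := (Finset.mem_Icc.mp hk).1; omega
    rw [← Nat.factorization_le_iff_dvd hd.ne' (pow_ne_zero 2 hk0),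
      ← Nat.factorization_le_iff_dvd hs0 hk0, Finsupp.le_def, Finsupp.le_def,
      Nat.factorization_pow]
    constructor
    · intro h q
      have := h q
      simp only [Finsupp.smul_apply, smul_eq_mul] at this
      rw [hsfac q]; omega
    · intro h q
      have := h q
      rw [hsfac q] at this
      simp only [Finsupp.smul_apply, smul_eq_mul]
      omega
  rw [Finset.filter_congr key]
  have hIcc : Finset.Icc 1 d = Finset.Ioc 0 d := rfl
  rw [hIcc, Nat.Ioc_filter_dvd_card_eq_div]
  have hd_eq : s * (∏ p ∈ d.primeFactors, p ^ (d.factorization p / 2)) = d := by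
    rw [hs, ← Finset.prod_mul_distrib]
    conv_rhs => rw [← Nat.factorization_prod_pow_eq_self hd.ne']
    rw [Finsupp.prod, Nat.support_factorization]
    refine Finset.prod_congr rfl fun p hp => ?_
    rw [← pow_add]
    congr 1
    omega
  exact Nat.div_eq_of_eq_mul_left (Nat.pos_of_ne_zero hs0) (by rw [mul_comm]; exact hd_eq.symm)

open ArithmeticFunction in
/-- The multiplicative function `d ↦ ∏ p^(⌊v_p(d)/2⌋)`. -/
def Gfun : ArithmeticFunction ℕ :=
  ⟨fun d => if d = 0 then 0 else ∏ p ∈ d.primeFactors, p ^ (d.factorization p / 2),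
   by simp⟩

lemma Gfun_apply {d : ℕ} (hd : d ≠ 0) :
    Gfun d = ∏ p ∈ d.primeFactors, p ^ (d.factorization p / 2) := if_neg hd

open ArithmeticFunction in
lemma Gfun_isMultiplicative : Gfun.IsMultiplicative := by
  constructor
  · rw [Gfun_apply one_ne_zero]; simp
  · intro m n h
    rcases eq_or_ne m 0 with rfl | hm
    · have : n = 1 := by simpa using h
      subst this; simp [Gfun]
    rcases eq_or_ne n 0 with rfl | hn
    · have : m = 1 := by simpa [Nat.coprime_zero_right] using h
      subst this; simp [Gfun]
    have hfz : ∀ {a b : ℕ}, a ≠ 0 → Nat.Coprime a b → ∀ p ∈ a.primeFactors,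
        b.factorization p = 0 := by
      intro a b ha hab p hp
      rw [← Finsupp.notMem_support_iff, Nat.support_factorization]
      exact Finset.disjoint_left.mp (Nat.Coprime.disjoint_primeFactors hab) hp
    rw [Gfun_apply (mul_ne_zero hm hn), Gfun_apply hm, Gfun_apply hn,
      Nat.Coprime.primeFactors_mul h,
      Finset.prod_union (Nat.Coprime.disjoint_primeFactors h)]
    congr 1
    · refine Finset.prod_congr rfl fun p hp => ?_
      rw [Nat.factorization_mul hm hn, Finsupp.add_apply, hfz hm h p hp, Nat.add_zero]
    · refine Finset.prod_congr rfl fun p hp => ?_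
      rw [Nat.factorization_mul hm hn, Finsupp.add_apply, hfz hn h.symm p hp, zero_add]

lemma Gfun_prime_pow {p : ℕ} (hp : p.Prime) (a : ℕ) : Gfun (p ^ a) = p ^ (a / 2) := by
  rcases Nat.eq_zero_or_pos a with rfl | ha
  · simp [Gfun]
  · rw [Gfun_apply (pow_ne_zero _ hp.ne_zero),
      Nat.primeFactors_prime_pow ha.ne' hp, Finset.prod_singleton,
      hp.factorization_pow, Finsupp.single_eq_same]

open ArithmeticFunction ArithmeticFunction.zeta in
lemma Hfun_eq_prod (n : ℕ) (hn : n ≠ 0) :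
    Hfun n = ∏ p ∈ n.primeFactors,
      ∑ a ∈ Finset.range (n.factorization p + 1), p ^ (a / 2) := by
  have hz : Hfun n = (ζ * Gfun) n := by
    rw [zeta_mul_apply, Hfun]
    refine Finset.sum_congr rfl fun d hd => ?_
    rw [Hfun_count d (Nat.pos_of_mem_divisors hd), Gfun_apply (Nat.pos_of_mem_divisors hd).ne']
  have hmult : (ζ * Gfun).IsMultiplicative := isMultiplicative_zeta.mul Gfun_isMultiplicative
  rw [hz]
  conv_lhs => rw [← Nat.factorization_prod_pow_eq_self hn, Finsupp.prod,
    Nat.support_factorization]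
  rw [hmult.map_prod _ _ (fun p hp q hq hpq => Nat.coprime_pow_primes _ _
    (Nat.prime_of_mem_primeFactors hp) (Nat.prime_of_mem_primeFactors hq) hpq)]
  refine Finset.prod_congr rfl fun p hp => ?_
  rw [zeta_mul_apply,
    Nat.sum_divisors_prime_pow (Nat.prime_of_mem_primeFactors hp)]
  exact Finset.sum_congr rfl fun i _ =>
    Gfun_prime_pow (Nat.prime_of_mem_primeFactors hp) i

open ArithmeticFunction in
lemma sigma_prod_eq (n : ℕ) (e : ℕ → ℕ) :
    ∑ d ∈ (∏ p ∈ n.primeFactors, p ^ e p).divisors, d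
      = ∏ p ∈ n.primeFactors, ∑ i ∈ Finset.range (e p + 1), p ^ i := by
  rw [← sigma_one_apply, isMultiplicative_sigma.map_prod _ _
    (fun p hp q hq hpq => Nat.coprime_pow_primes _ _
      (Nat.prime_of_mem_primeFactors hp) (Nat.prime_of_mem_primeFactors hq) hpq)]
  refine Finset.prod_congr rfl fun p hp => ?_
  rw [sigma_one_apply, Nat.sum_divisors_prime_pow (Nat.prime_of_mem_primeFactors hp)]

lemma sum_half_split (p α : ℕ) :
    ∑ a ∈ Finset.range (α + 1), p ^ (a / 2)
      = (∑ i ∈ Finset.range ((α + 1) / 2), p ^ i)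
        + ∑ i ∈ Finset.range (α / 2 + 1), p ^ i := by
  induction α with
  | zero => simp
  | succ α ih =>
    rw [Finset.sum_range_succ, ih]
    rcases Nat.even_or_odd α with ⟨m, rfl⟩ | ⟨m, rfl⟩
    · have e1 : (m + m + 1 + 1) / 2 = m + 1 := by omega
      have e2 : (m + m + 1) / 2 = m := by omega
      have e3 : (m + m) / 2 = m := by omega
      rw [e1, e2, e3, Finset.sum_range_succ]
      ring
    · have e1 : (2 * m + 1 + 1 + 1) / 2 = m + 1 := by omega
      have e2 : (2 * m + 1 + 1) / 2 = m + 1 := by omega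
      have e3 : (2 * m + 1) / 2 = m := by omega
      rw [e1, e2, e3, Finset.sum_range_succ _ (m + 1)]
      ring

/-- For `n ≥ 2` with `r` distinct prime factors `p` of multiplicity `α_p`,
`2^r·σ(∏ p^(⌈α_p/2⌉-1)) ≤ H(n) ≤ 2^r·σ(∏ p^(⌊α_p/2⌋))`; in particular `H(n) < n²`. -/
theorem statement13 (n : ℕ) (hn : 2 ≤ n) :
    2 ^ n.primeFactors.card *
        (∑ d ∈ (∏ p ∈ n.primeFactors, p ^ ((n.factorization p + 1) / 2 - 1)).divisors, d) ≤
      Hfun n ∧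
    Hfun n ≤ 2 ^ n.primeFactors.card *
        (∑ d ∈ (∏ p ∈ n.primeFactors, p ^ (n.factorization p / 2)).divisors, d) ∧
    Hfun n < n ^ 2 := by
  have h0 : n ≠ 0 := by omega
  have hfacpos : ∀ p ∈ n.primeFactors, 1 ≤ n.factorization p := fun p hp =>
    Nat.pos_of_ne_zero (Finsupp.mem_support_iff.mp (by rwa [Nat.support_factorization]))
  have hpow2 : ∀ (S : ℕ → ℕ), 2 ^ n.primeFactors.card * ∏ p ∈ n.primeFactors, S p
      = ∏ p ∈ n.primeFactors, 2 * S p := by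
    intro S
    rw [Finset.prod_mul_distrib, Finset.prod_const]
  rw [Hfun_eq_prod n h0, sigma_prod_eq, sigma_prod_eq, hpow2, hpow2]
  have hub : ∀ p ∈ n.primeFactors,
      ∑ a ∈ Finset.range (n.factorization p + 1), p ^ (a / 2)
        ≤ 2 * ∑ i ∈ Finset.range (n.factorization p / 2 + 1), p ^ i := by
    intro p hp
    rw [sum_half_split, two_mul]
    refine Nat.add_le_add_right (Finset.sum_le_sum_of_subset ?_) _
    exact Finset.range_subset_range.mpr (by omega)
  refine ⟨?_, ?_, ?_⟩
  · refine Finset.prod_le_prod' fun p hp => ?_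
    have hα := hfacpos p hp
    have he : (n.factorization p + 1) / 2 - 1 + 1 = (n.factorization p + 1) / 2 := by omega
    rw [he, sum_half_split, two_mul]
    refine Nat.add_le_add_left (Finset.sum_le_sum_of_subset ?_) _
    exact Finset.range_subset_range.mpr (by omega)
  · exact Finset.prod_le_prod' fun p hp => hub p hp
  · have hn2 : n ^ 2 = ∏ p ∈ n.primeFactors, p ^ (2 * n.factorization p) := by
      conv_lhs => rw [← Nat.factorization_prod_pow_eq_self h0, Finsupp.prod,
        Nat.support_factorization]
      rw [← Finset.prod_pow]
      exact Finset.prod_congr rfl fun p hp => by rw [← pow_mul, mul_comm]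
    rw [hn2]
    have hne : n.primeFactors.Nonempty := Nat.nonempty_primeFactors.mpr (by omega)
    refine lt_of_le_of_lt (Finset.prod_le_prod' fun p hp => hub p hp) ?_
    refine Finset.prod_lt_prod_of_nonempty (fun p hp => ?_) (fun p hp => ?_) hne
    · have h1 : 0 < ∑ i ∈ Finset.range (n.factorization p / 2 + 1), p ^ i :=
        Finset.sum_pos (fun i _ => pow_pos (Nat.prime_of_mem_primeFactors hp).pos i)
          (by simp)
      omega
    have hp2 : 2 ≤ p := (Nat.prime_of_mem_primeFactors hp).two_le
    have hα := hfacpos p hp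
    set b := n.factorization p / 2 with hb
    have hgs : ∑ i ∈ Finset.range (b + 1), p ^ i < p ^ (b + 1) :=
      Nat.geomSum_lt hp2 (fun k hk => Finset.mem_range.mp hk)
    calc 2 * ∑ i ∈ Finset.range (b + 1), p ^ i
        < 2 * p ^ (b + 1) := by omega
      _ ≤ p * p ^ (b + 1) := Nat.mul_le_mul_right _ hp2
      _ = p ^ (b + 2) := by ring
      _ ≤ p ^ (2 * n.factorization p) := Nat.pow_le_pow_right (by omega) (by omega)
end

section
/- Let p be a prime, k ≥ 1 an integer, D an integer, and let a be an integer coprime to p. Then the number of triples (α, β, γ) ∈ (ℤ/p^kℤ)³ satisfying (αβ + 1)² + D·(βγ)² ≡ a (mod p^k) is at most 2k·η(p^k)·p^{2k}, where η(p^k) = 4 if p = 2 and k ≥ 3, and η(p^k) = 2 otherwise. -/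
theorem st14_isUnit_iff {p k : ℕ} (hp : p.Prime) (hk : 1 ≤ k) (x : ZMod (p ^ k))
    [NeZero (p ^ k)] : IsUnit x ↔ ¬ p ∣ x.val := by
  conv_lhs => rw [← ZMod.natCast_zmod_val x]
  rw [ZMod.isUnit_iff_coprime, Nat.coprime_pow_right_iff hk, Nat.coprime_comm,
    Nat.Prime.coprime_iff_not_dvd hp]

theorem st14_nonunit_add {p k : ℕ} (hp : p.Prime) (hk : 1 ≤ k) [NeZero (p ^ k)]
    {x y : ZMod (p ^ k)} (hx : ¬ IsUnit x) (hy : ¬ IsUnit y) : ¬ IsUnit (x + y) := by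
  rw [st14_isUnit_iff hp hk] at *
  push_neg at *
  rw [ZMod.val_add]
  exact (Nat.dvd_mod_iff (dvd_pow_self p (Nat.one_le_iff_ne_zero.mp hk))).mpr
    (Nat.dvd_add hx hy)

theorem st14_unit_sub {p k : ℕ} (hp : p.Prime) (hk : 1 ≤ k) [NeZero (p ^ k)]
    {a m : ZMod (p ^ k)} (ha : IsUnit a) (hm : ¬ IsUnit m) : IsUnit (a - m) := by
  by_contra h
  exact (st14_nonunit_add hp hk h hm) (by simpa using ha)


theorem st14_fiber_le {n : ℕ} [NeZero n] (β d : ZMod n) :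
    (Finset.univ.filter fun α : ZMod n => α * β = d).card ≤ Nat.gcd β.val n := by
  set g := Nat.gcd β.val n with hg
  have hn : 0 < n := Nat.pos_of_ne_zero (NeZero.ne n)
  have hg0 : 0 < g := Nat.gcd_pos_of_pos_right _ hn
  rcases (Finset.univ.filter fun α : ZMod n => α * β = d).eq_empty_or_nonempty with he | hne
  · simp [he]
  obtain ⟨α₀, hα₀⟩ := hne
  have hα₀' : α₀ * β = d := (Finset.mem_filter.mp hα₀).2
  set n' := n / g with hn'
  have hn'0 : 0 < n' := Nat.div_pos (Nat.gcd_le_right _ hn) hg0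
  have hmul : n' * g = n := Nat.div_mul_cancel (Nat.gcd_dvd_right _ _)
  have key : ∀ α : ZMod n, α * β = d → n' ∣ (α - α₀).val := by
    intro α hα
    have h0 : (α - α₀) * β = 0 := by rw [sub_mul, hα, hα₀', sub_self]
    have h1 : n ∣ (α - α₀).val * β.val := by
      have hv := ZMod.val_mul (α - α₀) β
      rw [h0, ZMod.val_zero] at hv
      exact Nat.dvd_of_mod_eq_zero hv.symm
    have hco : Nat.Coprime (β.val / g) n' := Nat.coprime_div_gcd_div_gcd (m := β.val) hg0
    have h2 : n' ∣ (α - α₀).val * (β.val / g) := by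
      have hb : β.val = g * (β.val / g) := (Nat.mul_div_cancel' (Nat.gcd_dvd_left _ _)).symm
      have h3 : n' * g ∣ ((α - α₀).val * (β.val / g)) * g := by
        rw [hmul, show ((α - α₀).val * (β.val / g)) * g = (α - α₀).val * (g * (β.val / g))
          by ring, ← hb]
        exact h1
      exact (Nat.mul_dvd_mul_iff_right hg0).mp h3
    exact Nat.Coprime.dvd_of_dvd_mul_right hco.symm h2
  apply le_trans (Finset.card_le_card_of_injOn (fun α => (α - α₀).val / n')
    (t := Finset.range g) ?_ ?_) (by simp)
  · intro α hα
    simp only [Finset.mem_coe, Finset.mem_range]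
    have hlt : (α - α₀).val < n := ZMod.val_lt _
    rw [Nat.div_lt_iff_lt_mul hn'0, Nat.mul_comm, hmul]
    exact hlt
  · intro α₁ h₁ α₂ h₂ heq
    simp only at heq
    have d₁ := key α₁ (Finset.mem_filter.mp h₁).2
    have d₂ := key α₂ (Finset.mem_filter.mp h₂).2
    have hv : (α₁ - α₀).val = (α₂ - α₀).val := by
      rw [← Nat.div_mul_cancel d₁, ← Nat.div_mul_cancel d₂, heq]
    have := ZMod.val_injective n hv
    linear_combination this

theorem st14_unit_of_sq {n : ℕ} {x c : ZMod n} (h : x ^ 2 = c) (hc : IsUnit c) :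
    IsUnit x :=
  isUnit_of_mul_isUnit_left (by rw [← pow_two]; exact h ▸ hc)

theorem st14_half {K : ℕ} (z : ZMod (2 ^ (K + 1))) (m : ℤ)
    (hz : z = ((2 ^ K * m : ℤ) : ZMod (2 ^ (K + 1)))) :
    z = 0 ∨ z = ((2 ^ K : ℕ) : ZMod (2 ^ (K + 1))) := by
  have h2k : ((2 ^ (K + 1) : ℕ) : ZMod (2 ^ (K + 1))) = 0 := ZMod.natCast_self _
  push_cast at h2k
  rcases Int.even_or_odd m with ⟨u, hu⟩ | ⟨u, hu⟩
  · left
    rw [hz, hu]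
    push_cast
    rw [show ((2:ZMod (2^(K+1))) ^ K * ((u:ZMod (2^(K+1))) + u)) =
      (2^(K+1) : ZMod (2^(K+1))) * u by ring, h2k, zero_mul]
  · right
    rw [hz, hu]
    push_cast
    rw [show ((2:ZMod (2^(K+1))) ^ K * (2 * (u:ZMod (2^(K+1))) + 1)) =
      (2^(K+1) : ZMod (2^(K+1))) * u + 2^K by ring, h2k, zero_mul, zero_add]

theorem st14_sqrt_le {p k : ℕ} (hp : p.Prime) (hk : 1 ≤ k) [NeZero (p ^ k)]
    (c : ZMod (p ^ k)) (hc : IsUnit c) :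
    (Finset.univ.filter fun x : ZMod (p ^ k) => x ^ 2 = c).card ≤
      if p = 2 ∧ 3 ≤ k then 4 else 2 := by
  classical
  have hη2 : (2 : ℕ) ≤ if p = 2 ∧ 3 ≤ k then 4 else 2 := by split <;> norm_num
  rcases (Finset.univ.filter fun x : ZMod (p ^ k) => x ^ 2 = c).eq_empty_or_nonempty
    with he | hne
  · rw [he]; simpa using le_trans (by norm_num) hη2
  obtain ⟨y, hy⟩ := hne
  have hy2 : y ^ 2 = c := (Finset.mem_filter.mp hy).2
  have hyu : IsUnit y := st14_unit_of_sq hy2 hc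
  by_cases hp2 : p = 2
  · subst hp2
    by_cases hk3 : 3 ≤ k
    · rw [if_pos ⟨rfl, hk3⟩]
      obtain ⟨K, rfl⟩ : ∃ K, k = K + 1 := ⟨k - 1, by omega⟩
      refine le_trans (Finset.card_le_card
        (t := {y, -y, y + ((2 ^ K : ℕ) : ZMod (2 ^ (K + 1))),
               -y + ((2 ^ K : ℕ) : ZMod (2 ^ (K + 1)))}) ?_) ?_
      · intro x hx
        have hx2 : x ^ 2 = c := (Finset.mem_filter.mp hx).2
        have hxu : IsUnit x := st14_unit_of_sq hx2 hc
        have hA : ¬ (2 : ℕ) ∣ x.val := (st14_isUnit_iff Nat.prime_two hk x).mp hxu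
        have hB : ¬ (2 : ℕ) ∣ y.val := (st14_isUnit_iff Nat.prime_two hk y).mp hyu
        have hAodd : Odd (x.val : ℤ) := by
          rw [Int.odd_coe_nat]; exact Nat.odd_iff.mpr (Nat.two_dvd_ne_zero.mp hA)
        have hBodd : Odd (y.val : ℤ) := by
          rw [Int.odd_coe_nat]; exact Nat.odd_iff.mpr (Nat.two_dvd_ne_zero.mp hB)
        have hxcast : ((x.val : ℕ) : ZMod (2 ^ (K + 1))) = x := ZMod.natCast_zmod_val x
        have hycast : ((y.val : ℕ) : ZMod (2 ^ (K + 1))) = y := ZMod.natCast_zmod_val y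
        have hdvd : ((2 : ℤ) ^ (K + 1)) ∣ (y.val : ℤ) ^ 2 - (x.val : ℤ) ^ 2 := by
          have hmod : (((x.val : ℤ)^2 : ℤ) : ZMod (2 ^ (K + 1))) =
              (((y.val : ℤ)^2 : ℤ) : ZMod (2 ^ (K + 1))) := by
            push_cast
            rw [hxcast, hycast, hx2, hy2]
          have hmd := ((ZMod.intCast_eq_intCast_iff _ _ _).mp hmod).dvd
          rwa [Nat.cast_pow, Nat.cast_ofNat] at hmd
        obtain ⟨s, hs⟩ : Even ((x.val : ℤ) - y.val) := hAodd.sub_odd hBodd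
        obtain ⟨t, ht⟩ : Even ((x.val : ℤ) + y.val) := hAodd.add_odd hBodd
        have hst : (2 : ℤ) ^ (K + 1) ∣ 4 * (s * t) := by
          have h4 : (x.val : ℤ) ^ 2 - (y.val : ℤ) ^ 2 = 4 * (s * t) := by
            linear_combination ((x.val : ℤ) + y.val) * hs + (s + s) * ht
          rw [← h4]
          exact dvd_sub_comm.mp hdvd
        have hK2 : (2 : ℤ) ^ (K + 1) = 4 * 2 ^ (K - 1) := by
          rw [show K + 1 = (K - 1) + 2 by omega, pow_add]; ring
        have hst2 : (2 : ℤ) ^ (K - 1) ∣ s * t := by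
          rw [hK2] at hst
          exact (mul_dvd_mul_iff_left (by norm_num : (4:ℤ) ≠ 0)).mp hst
        have hpowK : (2 : ℤ) ^ K = 2 ^ (K - 1) * 2 := by
          conv_lhs => rw [show K = (K - 1) + 1 by omega, pow_succ]
        simp only [Finset.mem_insert, Finset.mem_singleton]
        obtain ⟨w0, hw0⟩ := hAodd
        rcases Int.even_or_odd s with ⟨u, hus⟩ | ⟨u, hus⟩
        · -- s even, so t odd
          obtain ⟨v, hvt⟩ : Odd t := by
            rcases Int.even_or_odd t with ⟨v, hv⟩ | h'
            · exfalso; omega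
            · exact h'
          have hco : IsCoprime ((2:ℤ) ^ (K - 1)) t :=
            IsCoprime.pow_left (⟨-v, 1, by rw [hvt]; ring⟩ : IsCoprime (2:ℤ) t)
          obtain ⟨w, hw⟩ : (2:ℤ) ^ (K - 1) ∣ s :=
            hco.dvd_of_dvd_mul_right hst2
          have hAB : (x.val : ℤ) - y.val = 2 ^ K * w := by
            rw [hpowK]; linarith [hs, hw]
          have hz := st14_half (x - y) w (by
            rw [← hAB]; push_cast; rw [hxcast, hycast])
          rcases hz with hz | hz
          · left; linear_combination hz
          · right; right; left; linear_combination hz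
        · -- s odd
          have hco : IsCoprime ((2:ℤ) ^ (K - 1)) s :=
            IsCoprime.pow_left (⟨-u, 1, by rw [hus]; ring⟩ : IsCoprime (2:ℤ) s)
          obtain ⟨w, hw⟩ : (2:ℤ) ^ (K - 1) ∣ t := hco.dvd_of_dvd_mul_left hst2
          have hAB : (x.val : ℤ) + y.val = 2 ^ K * w := by
            rw [hpowK]; linarith [ht, hw]
          have hz := st14_half (x + y) w (by
            rw [← hAB]; push_cast; rw [hxcast, hycast])
          rcases hz with hz | hz
          · right; left; linear_combination hz
          · right; right; right; linear_combination hz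
      · refine le_trans (Finset.card_insert_le _ _) (le_trans (Nat.add_le_add_right
          (Finset.card_insert_le _ _) 1) (le_trans (Nat.add_le_add_right
          (Nat.add_le_add_right (Finset.card_insert_le _ _) 1) 1) ?_))
        simp
    · rw [if_neg (by tauto)]
      refine le_trans (Finset.card_le_card_of_injOn
        (fun x => if hx : IsUnit x then hx.unit else 1)
        (t := (Finset.univ : Finset (ZMod (2 ^ k))ˣ)) (fun _ _ => Finset.mem_univ _) ?_) ?_
      · intro x₁ h₁ x₂ h₂ heq
        have hu₁ : IsUnit x₁ := st14_unit_of_sq (Finset.mem_filter.mp h₁).2 hc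
        have hu₂ : IsUnit x₂ := st14_unit_of_sq (Finset.mem_filter.mp h₂).2 hc
        simp only [dif_pos hu₁, dif_pos hu₂] at heq
        have := congrArg (Units.val) heq
        rwa [IsUnit.unit_spec, IsUnit.unit_spec] at this
      · rw [Finset.card_univ, ZMod.card_units_eq_totient,
          Nat.totient_prime_pow Nat.prime_two (by omega)]
        have : k - 1 ≤ 1 := by omega
        calc 2 ^ (k-1) * (2 - 1) = 2 ^ (k-1) := by ring
          _ ≤ 2 ^ 1 := Nat.pow_le_pow_right (by norm_num) this
          _ = 2 := by norm_num
  · rw [if_neg (by tauto)]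
    refine le_trans (Finset.card_le_card (t := {y, -y}) ?_) ?_
    · intro x hx
      have hx2 : x ^ 2 = c := (Finset.mem_filter.mp hx).2
      have hxu : IsUnit x := st14_unit_of_sq hx2 hc
      have hfac : (x - y) * (x + y) = 0 := by
        have h0 : x ^ 2 - y ^ 2 = 0 := by rw [hx2, hy2, sub_self]
        linear_combination h0
      have h2u : IsUnit (2 : ZMod (p ^ k)) := by
        have h2 : ((2 : ℕ) : ZMod (p ^ k)) = (2 : ZMod (p ^ k)) := by norm_cast
        rw [← h2, ZMod.isUnit_iff_coprime]
        exact Nat.Coprime.pow_right _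
          ((Nat.coprime_primes Nat.prime_two hp).mpr fun e => hp2 e.symm)
      have hsum : IsUnit ((x - y) + (x + y)) := by
        rw [show (x - y) + (x + y) = 2 * x by ring]
        exact h2u.mul hxu
      have hor : IsUnit (x - y) ∨ IsUnit (x + y) := by
        by_contra hcon
        push_neg at hcon
        exact st14_nonunit_add hp hk hcon.1 hcon.2 hsum
      simp only [Finset.mem_insert, Finset.mem_singleton]
      rcases hor with hu | hu
      · right
        have := (hu.mul_right_eq_zero).mp hfac
        linear_combination this
      · left
        have hfac' : (x + y) * (x - y) = 0 := by linear_combination hfac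
        have := (hu.mul_right_eq_zero).mp hfac'
        linear_combination this
    · exact le_trans (Finset.card_insert_le _ _)
        (Nat.succ_le_succ (Finset.card_singleton _).le)


open Finset

theorem st14_dvd_card {p k j : ℕ} (hp : 1 < p) [NeZero (p ^ k)] (hj : j ≤ k) :
    (Finset.univ.filter fun x : ZMod (p ^ k) => p ^ j ∣ x.val).card ≤ p ^ (k - j) := by
  classical
  refine le_trans (Finset.card_le_card_of_injOn (fun x => x.val / p ^ j)
    (t := Finset.range (p ^ (k - j))) ?_ ?_) (by simp)
  · intro x hx
    have hdvd : p ^ j ∣ x.val := (Finset.mem_filter.mp hx).2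
    have hlt : x.val < p ^ k := ZMod.val_lt x
    simp only [Finset.mem_coe, Finset.mem_range]
    rw [Nat.div_lt_iff_lt_mul (pow_pos (by omega) j)]
    calc x.val < p ^ k := hlt
      _ = p ^ (k - j) * p ^ j := by rw [← pow_add]; congr 1; omega
  · intro x₁ h₁ x₂ h₂ heq
    simp only at heq
    have d₁ : p ^ j ∣ x₁.val := (Finset.mem_filter.mp h₁).2
    have d₂ : p ^ j ∣ x₂.val := (Finset.mem_filter.mp h₂).2
    apply ZMod.val_injective
    rw [← Nat.div_mul_cancel d₁, ← Nat.div_mul_cancel d₂, heq]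

theorem st14_nonunit_card {p k : ℕ} (hp : p.Prime) (hk : 1 ≤ k) [NeZero (p ^ k)] :
    (Finset.univ.filter fun x : ZMod (p ^ k) => ¬ IsUnit x).card ≤ p ^ (k - 1) := by
  classical
  refine le_trans (Finset.card_le_card ?_) (st14_dvd_card hp.one_lt hk)
  intro x hx
  have hxu : ¬ IsUnit x := (Finset.mem_filter.mp hx).2
  rw [st14_isUnit_iff hp hk, not_not] at hxu
  simp only [Finset.mem_filter, Finset.mem_univ, true_and, pow_one]
  exact hxu

theorem st14_units_card {p k : ℕ} (hp : p.Prime) (hk : 1 ≤ k) [NeZero (p ^ k)] :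
    (Finset.univ.filter fun x : ZMod (p ^ k) => IsUnit x).card ≤ p ^ k - p ^ (k - 1) := by
  classical
  refine le_trans (Finset.card_le_card_of_injOn
    (fun x => if hx : IsUnit x then hx.unit else 1)
    (t := (Finset.univ : Finset (ZMod (p ^ k))ˣ)) (fun _ _ => Finset.mem_univ _) ?_) ?_
  · intro x₁ h₁ x₂ h₂ heq
    have hu₁ : IsUnit x₁ := (Finset.mem_filter.mp h₁).2
    have hu₂ : IsUnit x₂ := (Finset.mem_filter.mp h₂).2
    simp only [dif_pos hu₁, dif_pos hu₂] at heq
    have := congrArg Units.val heq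
    rwa [IsUnit.unit_spec, IsUnit.unit_spec] at this
  · rw [Finset.card_univ, ZMod.card_units_eq_totient, Nat.totient_prime_pow hp (by omega)]
    have h1 : p ^ (k - 1) * p = p ^ k := by rw [← pow_succ]; congr 1; omega
    have h2 : 1 ≤ p := hp.one_lt.le
    have h3 : p ^ (k - 1) * (p - 1) + p ^ (k - 1) = p ^ (k - 1) * p := by
      rw [← Nat.mul_succ]; congr 1; omega
    omega

theorem st14_gcd_sum {p k : ℕ} (hp : p.Prime) (hk : 1 ≤ k) [NeZero (p ^ k)] :
    (∑ β ∈ Finset.univ.filter (fun β : ZMod (p ^ k) => ¬ IsUnit β),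
      Nat.gcd β.val (p ^ k)) ≤ k * p ^ k := by
  classical
  haveI : Fact p.Prime := ⟨hp⟩
  set f : ZMod (p ^ k) → ℕ := fun β => if β = 0 then k else padicValNat p β.val with hf
  set s := Finset.univ.filter (fun β : ZMod (p ^ k) => ¬ IsUnit β) with hs
  have hmaps : ∀ β ∈ s, f β ∈ Finset.Icc 1 k := by
    intro β hβ
    have hβu : ¬ IsUnit β := (Finset.mem_filter.mp hβ).2
    by_cases h0 : β = 0
    · simp only [hf, h0, if_pos rfl, Finset.mem_Icc]
      omega
    · have hval : β.val ≠ 0 := fun h => h0 ((ZMod.val_eq_zero β).mp h)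
      rw [st14_isUnit_iff hp hk, not_not] at hβu
      have h1 : 1 ≤ padicValNat p β.val := by
        rw [← padicValNat_dvd_iff_le hval, pow_one]; exact hβu
      have h2 : padicValNat p β.val ≤ k := by
        by_contra hcon
        have : p ^ k ∣ β.val := (padicValNat_dvd_iff_le hval).mpr (by omega)
        have := Nat.le_of_dvd (Nat.pos_of_ne_zero hval) this
        have := ZMod.val_lt β
        omega
      simp only [hf, if_neg h0, Finset.mem_Icc]
      omega
  rw [← Finset.sum_fiberwise_of_maps_to hmaps (fun β => Nat.gcd β.val (p ^ k))]
  have hbound : ∀ j ∈ Finset.Icc 1 k,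
      (∑ β ∈ s.filter (fun β => f β = j), Nat.gcd β.val (p ^ k)) ≤ p ^ (k - j) * p ^ j := by
    intro j hj
    obtain ⟨hj1, hjk⟩ := Finset.mem_Icc.mp hj
    have hgcd : ∀ β ∈ s.filter (fun β => f β = j), Nat.gcd β.val (p ^ k) ≤ p ^ j := by
      intro β hβ
      have hfβ : f β = j := (Finset.mem_filter.mp hβ).2
      by_cases h0 : β = 0
      · subst h0
        simp only [hf, if_pos rfl] at hfβ
        subst hfβ
        simp [Nat.gcd_comm]
      · have hval : β.val ≠ 0 := fun h => h0 ((ZMod.val_eq_zero β).mp h)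
        simp only [hf, if_neg h0] at hfβ
        obtain ⟨i, hik, hi⟩ := (Nat.dvd_prime_pow hp).mp (Nat.gcd_dvd_right β.val (p ^ k))
        rw [hi]
        apply Nat.pow_le_pow_right hp.one_lt.le
        have : p ^ i ∣ β.val := hi ▸ Nat.gcd_dvd_left β.val (p ^ k)
        rw [padicValNat_dvd_iff_le hval] at this
        omega
    calc (∑ β ∈ s.filter (fun β => f β = j), Nat.gcd β.val (p ^ k))
        ≤ ∑ _β ∈ s.filter (fun β => f β = j), p ^ j := Finset.sum_le_sum hgcd
      _ = (s.filter (fun β => f β = j)).card * p ^ j := by rw [Finset.sum_const, smul_eq_mul]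
      _ ≤ p ^ (k - j) * p ^ j := by
          apply Nat.mul_le_mul_right
          refine le_trans (Finset.card_le_card ?_) (st14_dvd_card hp.one_lt hjk)
          intro β hβ
          have hfβ : f β = j := (Finset.mem_filter.mp hβ).2
          simp only [Finset.mem_filter, Finset.mem_univ, true_and]
          by_cases h0 : β = 0
          · subst h0; simp
          · simp only [hf, if_neg h0] at hfβ
            rw [← hfβ]
            exact pow_padicValNat_dvd
  calc (∑ j ∈ Finset.Icc 1 k, ∑ β ∈ s.filter (fun β => f β = j), Nat.gcd β.val (p ^ k))
      ≤ ∑ j ∈ Finset.Icc 1 k, p ^ (k - j) * p ^ j := Finset.sum_le_sum hbound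
    _ = ∑ j ∈ Finset.Icc 1 k, p ^ k := by
        apply Finset.sum_congr rfl
        intro j hj
        obtain ⟨_, hjk⟩ := Finset.mem_Icc.mp hj
        rw [← pow_add]; congr 1; omega
    _ = k * p ^ k := by rw [Finset.sum_const, Nat.card_Icc]; simp [smul_eq_mul]
theorem st14_M0 {p k : ℕ} (hp : p.Prime) (hk : 1 ≤ k) [NeZero (p ^ k)]
    (D A : ZMod (p ^ k)) (hA : IsUnit A) :
    (Finset.univ.filter fun wv : ZMod (p ^ k) × ZMod (p ^ k) =>
      wv.1 ^ 2 + D * wv.2 ^ 2 = A).card ≤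
      (if p = 2 ∧ 3 ≤ k then 4 else 2) * (p ^ k + p ^ (k - 1)) := by
  classical
  set η : ℕ := if p = 2 ∧ 3 ≤ k then 4 else 2 with hη
  set s := Finset.univ.filter (fun wv : ZMod (p ^ k) × ZMod (p ^ k) =>
    wv.1 ^ 2 + D * wv.2 ^ 2 = A) with hs
  have hsplit := Finset.card_filter_add_card_filter_not
    (s := s) (p := fun wv => IsUnit wv.1)
  have h1 : (s.filter fun wv => IsUnit wv.1).card ≤ η * p ^ k := by
    refine le_trans (Finset.card_le_mul_card_image_of_maps_to
      (f := fun wv => wv.2) (t := Finset.univ) (fun _ _ => Finset.mem_univ _) η ?_)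
      (le_of_eq (by rw [Finset.card_univ, ZMod.card]))
    intro v _
    rcases ((s.filter fun wv => IsUnit wv.1).filter
      fun wv => wv.2 = v).eq_empty_or_nonempty with he | hne
    · rw [he]
      simp only [Finset.card_empty, hη]
      split <;> norm_num
    obtain ⟨wv₀, hwv₀⟩ := hne
    have hm := Finset.mem_filter.mp hwv₀
    have hm2 := Finset.mem_filter.mp hm.1
    have hP₀ : wv₀.1 ^ 2 + D * wv₀.2 ^ 2 = A := (Finset.mem_filter.mp hm2.1).2
    have hv₀ : wv₀.2 = v := hm.2
    have hu₀ : IsUnit wv₀.1 := hm2.2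
    have hc : IsUnit (A - D * v ^ 2) := by
      have he : wv₀.1 ^ 2 = A - D * v ^ 2 := by rw [← hv₀]; linear_combination hP₀
      rw [← he]
      exact hu₀.pow 2
    refine le_trans (Finset.card_le_card_of_injOn (fun wv => wv.1)
      (t := Finset.univ.filter fun x : ZMod (p ^ k) => x ^ 2 = A - D * v ^ 2) ?_ ?_)
      (st14_sqrt_le hp hk _ hc)
    · intro wv hwv
      have hm' := Finset.mem_filter.mp hwv
      have hm2' := Finset.mem_filter.mp hm'.1
      have hP : wv.1 ^ 2 + D * wv.2 ^ 2 = A := (Finset.mem_filter.mp hm2'.1).2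
      have hv : wv.2 = v := hm'.2
      simp only [Finset.mem_coe, Finset.mem_filter, Finset.mem_univ, true_and]
      rw [← hv]
      linear_combination hP
    · intro x hx y hy hxy
      have e2 := (Finset.mem_filter.mp hx).2
      have e2' := (Finset.mem_filter.mp hy).2
      exact Prod.ext hxy (e2.trans e2'.symm)
  have h2 : (s.filter fun wv => ¬ IsUnit wv.1).card ≤ η * p ^ (k - 1) := by
    refine le_trans (Finset.card_le_mul_card_image_of_maps_to
      (f := fun wv => wv.1) (t := Finset.univ.filter fun w : ZMod (p ^ k) => ¬ IsUnit w)
      ?_ η ?_) ?_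
    · intro wv hwv
      simp only [Finset.mem_filter, Finset.mem_univ, true_and]
      exact (Finset.mem_filter.mp hwv).2
    · intro w hw
      have hwu : ¬ IsUnit w := (Finset.mem_filter.mp hw).2
      rcases ((s.filter fun wv => ¬ IsUnit wv.1).filter
        fun wv => wv.1 = w).eq_empty_or_nonempty with he | hne
      · rw [he]
        simp only [Finset.card_empty, hη]
        split <;> norm_num
      obtain ⟨wv₀, hwv₀⟩ := hne
      have hm := Finset.mem_filter.mp hwv₀
      have hm2 := Finset.mem_filter.mp hm.1
      have hP₀ : wv₀.1 ^ 2 + D * wv₀.2 ^ 2 = A := (Finset.mem_filter.mp hm2.1).2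
      have hw₀ : wv₀.1 = w := hm.2
      have hics : IsUnit (A - w ^ 2) := by
        apply st14_unit_sub hp hk hA
        intro hcon
        exact hwu (st14_unit_of_sq (x := w) (c := w ^ 2) rfl hcon)
      have hDv : D * wv₀.2 ^ 2 = A - w ^ 2 := by rw [← hw₀]; linear_combination hP₀
      have hD : IsUnit D := isUnit_of_mul_isUnit_left (hDv ▸ hics)
      have hc' : IsUnit ((↑hD.unit⁻¹ : ZMod (p ^ k)) * (A - w ^ 2)) :=
        (hD.unit⁻¹).isUnit.mul hics
      refine le_trans (Finset.card_le_card_of_injOn (fun wv => wv.2)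
        (t := Finset.univ.filter fun x : ZMod (p ^ k) =>
          x ^ 2 = (↑hD.unit⁻¹ : ZMod (p ^ k)) * (A - w ^ 2)) ?_ ?_)
        (st14_sqrt_le hp hk _ hc')
      · intro wv hwv
        have hm' := Finset.mem_filter.mp hwv
        have hm2' := Finset.mem_filter.mp hm'.1
        have hP : wv.1 ^ 2 + D * wv.2 ^ 2 = A := (Finset.mem_filter.mp hm2'.1).2
        have hwv1 : wv.1 = w := hm'.2
        simp only [Finset.mem_coe, Finset.mem_filter, Finset.mem_univ, true_and]
        have hDv' : D * wv.2 ^ 2 = A - w ^ 2 := by rw [← hwv1]; linear_combination hP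
        have hinv : (↑hD.unit⁻¹ : ZMod (p ^ k)) * D = 1 := hD.val_inv_mul
        calc wv.2 ^ 2 = ((↑hD.unit⁻¹ : ZMod (p ^ k)) * D) * wv.2 ^ 2 := by rw [hinv, one_mul]
          _ = (↑hD.unit⁻¹ : ZMod (p ^ k)) * (D * wv.2 ^ 2) := by ring
          _ = (↑hD.unit⁻¹ : ZMod (p ^ k)) * (A - w ^ 2) := by rw [hDv']
      · intro x hx y hy hxy
        have e2 := (Finset.mem_filter.mp hx).2
        have e2' := (Finset.mem_filter.mp hy).2
        exact Prod.ext (e2.trans e2'.symm) hxy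
    · exact Nat.mul_le_mul_left η (st14_nonunit_card hp hk)
  calc s.card = (s.filter fun wv => IsUnit wv.1).card +
        (s.filter fun wv => ¬ IsUnit wv.1).card := hsplit.symm
    _ ≤ η * p ^ k + η * p ^ (k - 1) := Nat.add_le_add h1 h2
    _ = η * (p ^ k + p ^ (k - 1)) := by ring
theorem st14_unit_beta {p k : ℕ} (hp : p.Prime) (hk : 1 ≤ k) [NeZero (p ^ k)]
    (D A β : ZMod (p ^ k)) (hA : IsUnit A) (hβ : IsUnit β) :
    (Finset.univ.filter fun ag : ZMod (p ^ k) × ZMod (p ^ k) =>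
      (ag.1 * β + 1) ^ 2 + D * (β * ag.2) ^ 2 = A).card ≤
      (if p = 2 ∧ 3 ≤ k then 4 else 2) * (p ^ k + p ^ (k - 1)) := by
  classical
  refine le_trans (Finset.card_le_card_of_injOn
    (fun ag => (ag.1 * β + 1, β * ag.2))
    (t := Finset.univ.filter fun wv : ZMod (p ^ k) × ZMod (p ^ k) =>
      wv.1 ^ 2 + D * wv.2 ^ 2 = A) ?_ ?_) (st14_M0 hp hk D A hA)
  · intro ag hag
    have h := (Finset.mem_filter.mp hag).2
    simp only [Finset.mem_coe, Finset.mem_filter, Finset.mem_univ, true_and]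
    exact h
  · intro x hx y hy hxy
    simp only [Prod.mk.injEq] at hxy
    obtain ⟨h1, h2⟩ := hxy
    have e1 : x.1 * β = y.1 * β := by linear_combination h1
    exact Prod.ext (hβ.mul_right_cancel e1) (hβ.mul_left_cancel h2)

theorem st14_nonunit_beta {p k : ℕ} (hp : p.Prime) (hk : 1 ≤ k) [NeZero (p ^ k)]
    (D A β : ZMod (p ^ k)) (hA : IsUnit A) (hβ : ¬ IsUnit β) :
    (Finset.univ.filter fun ag : ZMod (p ^ k) × ZMod (p ^ k) =>
      (ag.1 * β + 1) ^ 2 + D * (β * ag.2) ^ 2 = A).card ≤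
      ((if p = 2 ∧ 3 ≤ k then 4 else 2) * Nat.gcd β.val (p ^ k)) * p ^ k := by
  classical
  set η : ℕ := if p = 2 ∧ 3 ≤ k then 4 else 2 with hη
  refine le_trans (Finset.card_le_mul_card_image_of_maps_to (f := fun ag => ag.2)
    (t := Finset.univ) (fun _ _ => Finset.mem_univ _) (η * Nat.gcd β.val (p ^ k)) ?_)
    (le_of_eq (by rw [Finset.card_univ, ZMod.card]))
  intro γ _
  have hβγ : ¬ IsUnit (β * γ) := fun h => hβ (isUnit_of_mul_isUnit_left h)
  have hsq : ¬ IsUnit ((β * γ) ^ 2) := fun h => hβγ (st14_unit_of_sq rfl h)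
  have hm : ¬ IsUnit (D * (β * γ) ^ 2) := fun h => hsq (isUnit_of_mul_isUnit_right h)
  have hc : IsUnit (A - D * (β * γ) ^ 2) := st14_unit_sub hp hk hA hm
  refine le_trans (Finset.card_le_card_of_injOn (fun ag => ag.1)
    (t := Finset.univ.filter fun α : ZMod (p ^ k) =>
      (α * β + 1) ^ 2 = A - D * (β * γ) ^ 2) ?_ ?_) ?_
  · intro ag hag
    have hmem := Finset.mem_filter.mp hag
    have hP : (ag.1 * β + 1) ^ 2 + D * (β * ag.2) ^ 2 = A := (Finset.mem_filter.mp hmem.1).2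
    have hγ : ag.2 = γ := hmem.2
    simp only [Finset.mem_coe, Finset.mem_filter, Finset.mem_univ, true_and]
    rw [← hγ]
    linear_combination hP
  · intro x hx y hy hxy
    have e2 := (Finset.mem_filter.mp hx).2
    have e2' := (Finset.mem_filter.mp hy).2
    exact Prod.ext hxy (e2.trans e2'.symm)
  · refine le_trans (Finset.card_le_mul_card_image (f := fun α => α * β + 1) _
      (Nat.gcd β.val (p ^ k)) ?_) ?_
    · intro w _
      refine le_trans (Finset.card_le_card ?_) (st14_fiber_le β (w - 1))
      intro α hα
      have hmem := Finset.mem_filter.mp hα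
      have h2 : α * β + 1 = w := hmem.2
      simp only [Finset.mem_filter, Finset.mem_univ, true_and]
      linear_combination h2
    · have himg : ((Finset.univ.filter fun α : ZMod (p ^ k) =>
          (α * β + 1) ^ 2 = A - D * (β * γ) ^ 2).image (fun α => α * β + 1)).card ≤ η := by
        refine le_trans (Finset.card_le_card ?_) (st14_sqrt_le hp hk _ hc)
        intro w hw
        obtain ⟨α, hα, hαw⟩ := Finset.mem_image.mp hw
        have hsq' : (α * β + 1) ^ 2 = A - D * (β * γ) ^ 2 := (Finset.mem_filter.mp hα).2
        simp only [Finset.mem_filter, Finset.mem_univ, true_and]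
        rw [← hαw]
        exact hsq'
      calc Nat.gcd β.val (p ^ k) * ((Finset.univ.filter fun α : ZMod (p ^ k) =>
            (α * β + 1) ^ 2 = A - D * (β * γ) ^ 2).image (fun α => α * β + 1)).card
          ≤ Nat.gcd β.val (p ^ k) * η := Nat.mul_le_mul_left _ himg
        _ = η * Nat.gcd β.val (p ^ k) := Nat.mul_comm _ _
/-- For a prime `p`, `k ≥ 1`, integers `D` and `a` with `gcd(a, p) = 1`, the number of triples
`(α, β, γ)` in `(ℤ/p^kℤ)³` with `(αβ + 1)² + D(βγ)² ≡ a (mod p^k)` is at most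
`2k·η(p^k)·p^(2k)`, where `η(p^k) = 4` if `p = 2 ∧ 3 ≤ k` and `η(p^k) = 2` otherwise. -/
theorem statement14 (p : ℕ) (hp : p.Prime) (k : ℕ) (hk : 1 ≤ k) (D a : ℤ)
    (ha : IsCoprime a (p : ℤ)) :
    Nat.card {t : ZMod (p ^ k) × ZMod (p ^ k) × ZMod (p ^ k) //
        (t.1 * t.2.1 + 1) ^ 2 + (D : ZMod (p ^ k)) * (t.2.1 * t.2.2) ^ 2 = (a : ZMod (p ^ k))} ≤
      2 * k * (if p = 2 ∧ 3 ≤ k then 4 else 2) * p ^ (2 * k) := by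
  classical
  haveI : NeZero (p ^ k) := ⟨(pow_pos hp.pos k).ne'⟩
  set η : ℕ := if p = 2 ∧ 3 ≤ k then 4 else 2 with hη
  have hη2 : 2 ≤ η := by rw [hη]; split <;> norm_num
  have haZ : IsUnit ((a : ZMod (p ^ k))) := by
    rw [st14_isUnit_iff hp hk]
    intro hdvd
    have h1 : (((a : ZMod (p ^ k)).val : ℕ) : ZMod (p ^ k)) = (a : ZMod (p ^ k)) :=
      ZMod.natCast_zmod_val _
    have h2 : ((a - ((a : ZMod (p ^ k)).val : ℤ) : ℤ) : ZMod (p ^ k)) = 0 := by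
      push_cast [h1]
      ring
    rw [ZMod.intCast_zmod_eq_zero_iff_dvd] at h2
    have h3 : (p : ℤ) ∣ a := by
      have hpk : (p : ℤ) ∣ ((p ^ k : ℕ) : ℤ) := by
        push_cast
        exact dvd_pow_self _ (by omega)
      have h4 : (p : ℤ) ∣ (((a : ZMod (p ^ k)).val : ℕ) : ℤ) := Int.natCast_dvd_natCast.mpr hdvd
      have h5 : (p : ℤ) ∣ a - ((a : ZMod (p ^ k)).val : ℤ) := dvd_trans hpk h2
      have h6 := dvd_add h5 h4
      rwa [sub_add_cancel] at h6
    obtain ⟨u, v, huv⟩ := ha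
    have h6 : (p : ℤ) ∣ 1 := by
      rw [← huv]
      exact dvd_add (h3.mul_left u) ((dvd_refl _).mul_left v)
    have h7 : (p : ℤ) ≤ 1 := Int.le_of_dvd one_pos h6
    have := hp.one_lt
    omega
  rw [Nat.card_eq_fintype_card, Fintype.card_subtype]
  rw [Finset.card_eq_sum_card_fiberwise
    (f := fun t : ZMod (p ^ k) × ZMod (p ^ k) × ZMod (p ^ k) => t.2.1)
    (t := Finset.univ) (fun _ _ => Finset.mem_univ _)]
  have hfib : ∀ β : ZMod (p ^ k),
      ((Finset.univ.filter fun t : ZMod (p ^ k) × ZMod (p ^ k) × ZMod (p ^ k) =>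
        (t.1 * t.2.1 + 1) ^ 2 + (D : ZMod (p ^ k)) * (t.2.1 * t.2.2) ^ 2
          = (a : ZMod (p ^ k))).filter fun t => t.2.1 = β).card ≤
      (if IsUnit β then η * (p ^ k + p ^ (k - 1))
        else (η * Nat.gcd β.val (p ^ k)) * p ^ k) := by
    intro β
    have hinj : ((Finset.univ.filter fun t : ZMod (p ^ k) × ZMod (p ^ k) × ZMod (p ^ k) =>
        (t.1 * t.2.1 + 1) ^ 2 + (D : ZMod (p ^ k)) * (t.2.1 * t.2.2) ^ 2
          = (a : ZMod (p ^ k))).filter fun t => t.2.1 = β).card ≤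
        (Finset.univ.filter fun ag : ZMod (p ^ k) × ZMod (p ^ k) =>
          (ag.1 * β + 1) ^ 2 + (D : ZMod (p ^ k)) * (β * ag.2) ^ 2
            = (a : ZMod (p ^ k))).card := by
      apply Finset.card_le_card_of_injOn (fun t => (t.1, t.2.2))
      · intro t ht
        have hmem := Finset.mem_filter.mp ht
        have hP := (Finset.mem_filter.mp hmem.1).2
        have hβ : t.2.1 = β := hmem.2
        simp only [Finset.mem_coe, Finset.mem_filter, Finset.mem_univ, true_and]
        rw [← hβ]
        exact hP
      · intro x hx y hy hxy
        have hβx : x.2.1 = β := (Finset.mem_filter.mp hx).2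
        have hβy : y.2.1 = β := (Finset.mem_filter.mp hy).2
        simp only [Prod.mk.injEq] at hxy
        exact Prod.ext hxy.1 (Prod.ext (hβx.trans hβy.symm) hxy.2)
    split
    · exact hinj.trans (st14_unit_beta hp hk _ _ β haZ (by assumption))
    · exact hinj.trans (st14_nonunit_beta hp hk _ _ β haZ (by assumption))
  have hsum : (∑ β : ZMod (p ^ k),
      ((Finset.univ.filter fun t : ZMod (p ^ k) × ZMod (p ^ k) × ZMod (p ^ k) =>
        (t.1 * t.2.1 + 1) ^ 2 + (D : ZMod (p ^ k)) * (t.2.1 * t.2.2) ^ 2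
          = (a : ZMod (p ^ k))).filter fun t => t.2.1 = β).card) ≤
      ∑ β : ZMod (p ^ k), (if IsUnit β then η * (p ^ k + p ^ (k - 1))
        else (η * Nat.gcd β.val (p ^ k)) * p ^ k) :=
    Finset.sum_le_sum fun β _ => hfib β
  refine le_trans hsum ?_
  rw [Finset.sum_ite]
  have hterm1 : (∑ _β ∈ Finset.univ.filter (fun β : ZMod (p ^ k) => IsUnit β),
      η * (p ^ k + p ^ (k - 1))) ≤ (p ^ k - p ^ (k - 1)) * (η * (p ^ k + p ^ (k - 1))) := by
    rw [Finset.sum_const, smul_eq_mul]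
    exact Nat.mul_le_mul_right _ (st14_units_card hp hk)
  have hterm2 : (∑ β ∈ Finset.univ.filter (fun β : ZMod (p ^ k) => ¬ IsUnit β),
      (η * Nat.gcd β.val (p ^ k)) * p ^ k) ≤ (η * p ^ k) * (k * p ^ k) := by
    have : ∀ β ∈ Finset.univ.filter (fun β : ZMod (p ^ k) => ¬ IsUnit β),
        (η * Nat.gcd β.val (p ^ k)) * p ^ k = (η * p ^ k) * Nat.gcd β.val (p ^ k) := by
      intro β _
      ring
    rw [Finset.sum_congr rfl this, ← Finset.mul_sum]
    exact Nat.mul_le_mul_left _ (st14_gcd_sum hp hk)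
  refine le_trans (Nat.add_le_add hterm1 hterm2) ?_
  -- final arithmetic
  have hBA : p ^ (k - 1) ≤ p ^ k := Nat.pow_le_pow_right hp.one_lt.le (by omega)
  have hABle : (p ^ k - p ^ (k - 1)) * (p ^ k + p ^ (k - 1)) ≤ p ^ k * p ^ k := by
    have e1 : (p ^ k - p ^ (k - 1)) * (p ^ k + p ^ (k - 1)) =
        p ^ k * (p ^ k + p ^ (k - 1)) - p ^ (k - 1) * (p ^ k + p ^ (k - 1)) :=
      Nat.sub_mul _ _ _
    have e2 : p ^ k * (p ^ k + p ^ (k - 1)) = p ^ k * p ^ k + p ^ k * p ^ (k - 1) := by ring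
    have e3 : p ^ (k - 1) * (p ^ k + p ^ (k - 1)) =
        p ^ k * p ^ (k - 1) + p ^ (k - 1) * p ^ (k - 1) := by ring
    omega
  have hpow : p ^ (2 * k) = p ^ k * p ^ k := by rw [two_mul, pow_add]
  have h1 : (p ^ k - p ^ (k - 1)) * (η * (p ^ k + p ^ (k - 1))) ≤ η * p ^ (2 * k) := by
    calc (p ^ k - p ^ (k - 1)) * (η * (p ^ k + p ^ (k - 1)))
        = η * ((p ^ k - p ^ (k - 1)) * (p ^ k + p ^ (k - 1))) := by ring
      _ ≤ η * (p ^ k * p ^ k) := Nat.mul_le_mul_left _ hABle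
      _ = η * p ^ (2 * k) := by rw [hpow]
  have h2 : (η * p ^ k) * (k * p ^ k) = k * (η * p ^ (2 * k)) := by
    rw [hpow]; ring
  calc (p ^ k - p ^ (k - 1)) * (η * (p ^ k + p ^ (k - 1))) + (η * p ^ k) * (k * p ^ k)
      ≤ η * p ^ (2 * k) + k * (η * p ^ (2 * k)) := by rw [h2]; exact Nat.add_le_add_right h1 _
    _ = (k + 1) * (η * p ^ (2 * k)) := by ring
    _ ≤ (2 * k) * (η * p ^ (2 * k)) := Nat.mul_le_mul (by omega) le_rfl
    _ = 2 * k * η * p ^ (2 * k) := by ring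
end
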